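/- arXiv:2206.08279 — 2 statements merged into one kernel-verified Lean document; each statement's English description precedes it below -/
import Mathlib

section
/- Let μ be a finite positive Borel measure on the unit circle T with infinite support, and fix a sequence {w_n} ⊂ T; for each n let ζ_{0n}, …, ζ_{nn} ∈ T be the zeros of the para-orthogonal polynomial B_{n+1}(w_n,·) and L_n(f) the Lagrange interpolant at these zeros. If f is in the disk algebra and {P_n} is any sequence of polynomials with deg P_n ≤ n and max_{z∈T} |f(z) − P_n(z)| → 0, then ∫_T |L_n(f) − P_n|² dμ ≤ μ(T) · (max_{z∈T} |f(z) − P_n(z)|)², and consequently ∫_T |f − L_n(f)|² dμ → 0 as n → ∞. -/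
open MeasureTheory Polynomial Filter
open scoped ComplexConjugate Topology

/-- The Christoffel kernel `K_n(w,z) = ∑_{j=0}^n conj(φ_j(w)) φ_j(z)`. -/
noncomputable def christoffelK (φ : ℕ → Polynomial ℂ) (n : ℕ) (w z : ℂ) : ℂ :=
  ∑ j ∈ Finset.range (n + 1), conj ((φ j).eval w) * (φ j).eval z

/-- The para-orthogonal polynomial `B_{n+1}(w,z) = (1 − conj(w) z) K_n(w,z)`. -/
noncomputable def paraOrtho (φ : ℕ → Polynomial ℂ) (n : ℕ) (w z : ℂ) : ℂ :=
  (1 - conj w * z) * christoffelK φ n w z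

/-- The `j`-th fundamental (Lagrange) polynomial for the nodes `ζ`:
`ℓ_{jn}(z) = K_n(z, ζ_{jn}) / K_n(ζ_{jn}, ζ_{jn})`.  Note that by Hermitian symmetry of the
kernel, `K_n(z, ζ) = conj (K_n(ζ, z))`; as a *polynomial* in `z` (of degree `n`, as in the
paper) the fundamental polynomial is `z ↦ K_n(ζ_{jn}, z) / K_n(ζ_{jn}, ζ_{jn})`, with
`K_n(ζ_{jn}, ζ_{jn}) = ∑_k |φ_k(ζ_{jn})|²` a positive real number. -/
noncomputable def ellFun (φ : ℕ → Polynomial ℂ) (n : ℕ) (ζ : Fin (n + 1) → ℂ)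
    (j : Fin (n + 1)) (z : ℂ) : ℂ :=
  christoffelK φ n (ζ j) z / christoffelK φ n (ζ j) (ζ j)

/-- The `n`-th Lagrange interpolation polynomial of `f` at the nodes `ζ`:
`L_n(f)(z) = ∑_{j=0}^n f(ζ_{jn}) ℓ_{jn}(z)`. -/
noncomputable def lagrangeInterp (φ : ℕ → Polynomial ℂ) (n : ℕ) (ζ : Fin (n + 1) → ℂ)
    (f : ℂ → ℂ) (z : ℂ) : ℂ :=
  ∑ j : Fin (n + 1), f (ζ j) * ellFun φ n ζ j z

set_option linter.unusedSectionVars false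
set_option linter.unusedVariables false
set_option linter.unusedTactic false

namespace CD25

lemma stepA_core (d d' c c' Z W' a b u v a' b' u' v' : ℂ) (hdd : d * d' ≠ 0)
    (hnorm : d * d' + c * c' = 1)
    (e1 : d * u = Z * a - c * b) (e1w : d' * u' = W' * a' - c' * b')
    (e2 : d' * v = b - c' * (Z * a)) (e2w : d * v' = b' - c * (W' * a')) :
    v' * v - u' * u = b' * b - W' * Z * (a' * a) := by
  apply mul_left_cancel₀ hdd
  calc (d * d') * (v' * v - u' * u)
      = (d * v') * (d' * v) - (d' * u') * (d * u) := by ring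
    _ = (b' - c * (W' * a')) * (b - c' * (Z * a))
        - (W' * a' - c' * b') * (Z * a - c * b) := by rw [e1, e1w, e2, e2w]
    _ = (d * d') * (b' * b - W' * Z * (a' * a)) := by
        linear_combination (-(b' * b - W' * Z * (a' * a))) * hnorm

lemma unit_mul {z : ℂ} (hz : ‖z‖ = 1) : z * conj z = 1 := by
  rw [Complex.mul_conj]
  norm_cast
  rw [Complex.normSq_eq_norm_sq, hz, one_pow]

variable (μ : Measure ℂ) [IsFiniteMeasure μ] (φ : ℕ → Polynomial ℂ)

lemma ae_sphere (hμT : μ (Metric.sphere (0 : ℂ) 1)ᶜ = 0) : ∀ᵐ z ∂μ, ‖z‖ = 1 := by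
  refine ae_iff.2 ?_
  convert hμT using 2
  ext z
  simp [Metric.mem_sphere, dist_zero_right]

lemma integ {E : Type*} [NormedAddCommGroup E] (hμT : μ (Metric.sphere (0 : ℂ) 1)ᶜ = 0)
    {u : ℂ → E} (hu : Continuous u) : Integrable u μ := by
  obtain ⟨C, hC⟩ := (isCompact_sphere (0:ℂ) 1).exists_bound_of_continuousOn hu.continuousOn
  refine (integrable_const C).mono' hu.aestronglyMeasurable ?_
  filter_upwards [ae_sphere μ hμT] with z hz
  exact hC z (by simp [Metric.mem_sphere, dist_zero_right, hz])

/-- The basic inner product of two polynomials in `L²(μ)`. -/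
noncomputable def Ip (p q : Polynomial ℂ) : ℂ := ∫ z, p.eval z * conj (q.eval z) ∂μ

lemma contPQ (p q : Polynomial ℂ) : Continuous fun z : ℂ => p.eval z * conj (q.eval z) :=
  p.continuous.mul (Complex.continuous_conj.comp q.continuous)

lemma intPQ (hμT : μ (Metric.sphere (0 : ℂ) 1)ᶜ = 0) (p q : Polynomial ℂ) :
    Integrable (fun z : ℂ => p.eval z * conj (q.eval z)) μ :=
  integ μ hμT (contPQ p q)

lemma Ip_conj (p q : Polynomial ℂ) : Ip μ p q = conj (Ip μ q p) := by
  rw [Ip, Ip, ← integral_conj]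
  congr 1; ext z; simp [mul_comm]

lemma Ip_Cmul_left (a : ℂ) (p q : Polynomial ℂ) : Ip μ (Polynomial.C a * p) q = a * Ip μ p q := by
  rw [Ip, Ip, ← integral_const_mul]
  congr 1; ext z; simp [mul_assoc]

lemma Ip_Cmul_right (a : ℂ) (p q : Polynomial ℂ) :
    Ip μ p (Polynomial.C a * q) = conj a * Ip μ p q := by
  rw [Ip, Ip, ← integral_const_mul]
  congr 1; ext z; simp; ring

lemma Ip_smul_left (a : ℂ) (p q : Polynomial ℂ) : Ip μ (a • p) q = a * Ip μ p q := by
  rw [smul_eq_C_mul, Ip_Cmul_left]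

lemma Ip_smul_right (a : ℂ) (p q : Polynomial ℂ) : Ip μ p (a • q) = conj a * Ip μ p q := by
  rw [smul_eq_C_mul, Ip_Cmul_right]

lemma Ip_sum_left (hμT : μ (Metric.sphere (0 : ℂ) 1)ᶜ = 0) {ι : Type*} (s : Finset ι)
    (pf : ι → Polynomial ℂ) (q : Polynomial ℂ) :
    Ip μ (∑ i ∈ s, pf i) q = ∑ i ∈ s, Ip μ (pf i) q := by
  simp only [Ip]
  rw [← integral_finset_sum s (fun i _ => intPQ μ hμT (pf i) q)]
  congr 1; ext z
  simp [Polynomial.eval_finset_sum, Finset.sum_mul]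

lemma Ip_sum_right (hμT : μ (Metric.sphere (0 : ℂ) 1)ᶜ = 0) {ι : Type*} (s : Finset ι)
    (p : Polynomial ℂ) (qf : ι → Polynomial ℂ) :
    Ip μ p (∑ i ∈ s, qf i) = ∑ i ∈ s, Ip μ p (qf i) := by
  rw [Ip_conj, Ip_sum_left μ hμT, map_sum]
  exact Finset.sum_congr rfl fun i _ => (Ip_conj μ p (qf i)).symm

lemma Ip_sub_left (hμT : μ (Metric.sphere (0 : ℂ) 1)ᶜ = 0) (p₁ p₂ q : Polynomial ℂ) :
    Ip μ (p₁ - p₂) q = Ip μ p₁ q - Ip μ p₂ q := by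
  rw [Ip, Ip, Ip, ← integral_sub (intPQ μ hμT p₁ q) (intPQ μ hμT p₂ q)]
  congr 1; ext z; simp [sub_mul]

lemma Ip_add_left (hμT : μ (Metric.sphere (0 : ℂ) 1)ᶜ = 0) (p₁ p₂ q : Polynomial ℂ) :
    Ip μ (p₁ + p₂) q = Ip μ p₁ q + Ip μ p₂ q := by
  rw [Ip, Ip, Ip, ← integral_add (intPQ μ hμT p₁ q) (intPQ μ hμT p₂ q)]
  congr 1; ext z; simp [add_mul]

lemma Ip_add_right (hμT : μ (Metric.sphere (0 : ℂ) 1)ᶜ = 0) (p q₁ q₂ : Polynomial ℂ) :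
    Ip μ p (q₁ + q₂) = Ip μ p q₁ + Ip μ p q₂ := by
  rw [Ip_conj, Ip_add_left μ hμT, map_add, ← Ip_conj, ← Ip_conj]

lemma Ip_shift (hμT : μ (Metric.sphere (0 : ℂ) 1)ᶜ = 0) (p q : Polynomial ℂ) :
    Ip μ (Polynomial.X * p) (Polynomial.X * q) = Ip μ p q := by
  rw [Ip, Ip]
  refine integral_congr_ae ?_
  filter_upwards [ae_sphere μ hμT] with z hz
  simp only [eval_mul, eval_X, map_mul]
  have h1 := unit_mul hz
  ring_nf
  calc z * p.eval z * conj z * conj (q.eval z)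
      = (z * conj z) * (p.eval z * conj (q.eval z)) := by ring
    _ = p.eval z * conj (q.eval z) := by rw [h1, one_mul]

lemma degree_C_mul_le' (a : ℂ) (p : Polynomial ℂ) : (Polynomial.C a * p).degree ≤ p.degree :=
  le_trans (Polynomial.degree_mul_le _ _)
    (by simpa using add_le_add_left (Polynomial.degree_C_le (a := a)) p.degree)

lemma leadingCoeff_ne (hlead : ∀ k, 0 < ((φ k).leadingCoeff).re ∧ ((φ k).leadingCoeff).im = 0)
    (k : ℕ) : (φ k).leadingCoeff ≠ 0 := by
  intro h
  have := (hlead k).1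
  rw [h] at this
  simp at this

lemma natDeg_phi (hdeg : ∀ k, (φ k).degree = (k : ℕ)) (k : ℕ) : (φ k).natDegree = k :=
  Polynomial.natDegree_eq_of_degree_eq_some (hdeg k)

lemma span_phi (hdeg : ∀ k, (φ k).degree = (k : ℕ))
    (hlead : ∀ k, 0 < ((φ k).leadingCoeff).re ∧ ((φ k).leadingCoeff).im = 0) :
    ∀ n (p : Polynomial ℂ), p.degree ≤ (n : ℕ) →
      ∃ c : Fin (n + 1) → ℂ, p = ∑ k, c k • φ k := by
  intro n
  induction n with
  | zero =>
    intro p hp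
    have hp0 : p = Polynomial.C (p.coeff 0) := Polynomial.eq_C_of_degree_le_zero (by simpa using hp)
    have hφ0 : φ 0 = Polynomial.C ((φ 0).coeff 0) :=
      Polynomial.eq_C_of_degree_le_zero (le_of_eq (by simpa using hdeg 0))
    have hne : (φ 0).coeff 0 ≠ 0 := by
      have := leadingCoeff_ne φ hlead 0
      rwa [Polynomial.leadingCoeff, natDeg_phi φ hdeg 0] at this
    set b : ℂ := (φ 0).coeff 0 with hb
    have key : (p.coeff 0 / b) • φ 0 = p := by
      rw [hφ0, smul_eq_C_mul, ← Polynomial.C_mul, div_mul_cancel₀ _ hne, ← hp0]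
    refine ⟨fun _ => p.coeff 0 / b, ?_⟩
    rw [Fin.sum_univ_one]
    exact key.symm
  | succ n ih =>
    intro p hp
    set a : ℂ := p.coeff (n + 1) / (φ (n + 1)).leadingCoeff with ha
    set q : Polynomial ℂ := p - a • φ (n + 1) with hq
    have hqc : q.coeff (n + 1) = 0 := by
      have hl : (φ (n + 1)).coeff (n + 1) = (φ (n + 1)).leadingCoeff := by
        rw [Polynomial.leadingCoeff, natDeg_phi φ hdeg (n + 1)]
      simp only [hq, Polynomial.coeff_sub, Polynomial.coeff_smul, hl, smul_eq_mul, ha]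
      field_simp [leadingCoeff_ne φ hlead (n + 1)]
      ring
    have hqd : q.degree ≤ (n : ℕ) := by
      rw [Polynomial.degree_le_iff_coeff_zero]
      intro m hm
      have hm' : n < m := by exact_mod_cast hm
      rcases eq_or_lt_of_le (Nat.succ_le_of_lt hm') with h | h
      · rw [← h]; exact hqc
      · have h1 : p.coeff m = 0 :=
          Polynomial.coeff_eq_zero_of_degree_lt (lt_of_le_of_lt hp (by exact_mod_cast h))
        have h2 : (φ (n + 1)).coeff m = 0 :=
          Polynomial.coeff_eq_zero_of_degree_lt (by rw [hdeg (n + 1)]; exact_mod_cast h)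
        simp [hq, h1, h2]
    obtain ⟨c, hc⟩ := ih q hqd
    refine ⟨Fin.snoc c a, ?_⟩
    rw [Fin.sum_univ_castSucc]
    simp only [Fin.snoc_castSucc, Fin.snoc_last, Fin.val_last]
    simp only [Fin.coe_castSucc]
    rw [← hc, hq]
    ring

lemma Ip_phi (horth : ∀ k m, ∫ z, (φ k).eval z * conj ((φ m).eval z) ∂μ
      = if k = m then 1 else 0) (k m : ℕ) :
    Ip μ (φ k) (φ m) = if k = m then 1 else 0 := horth k m

lemma orth_lt (hμT : μ (Metric.sphere (0 : ℂ) 1)ᶜ = 0)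
    (hdeg : ∀ k, (φ k).degree = (k : ℕ))
    (hlead : ∀ k, 0 < ((φ k).leadingCoeff).re ∧ ((φ k).leadingCoeff).im = 0)
    (horth : ∀ k m, ∫ z, (φ k).eval z * conj ((φ m).eval z) ∂μ = if k = m then 1 else 0)
    (m : ℕ) (q : Polynomial ℂ) (hq : q.degree < (m : ℕ)) : Ip μ (φ m) q = 0 := by
  cases m with
  | zero =>
    have : q = 0 := by
      rw [← Polynomial.degree_eq_bot]
      exact Nat.WithBot.lt_zero_iff.1 (by exact_mod_cast hq)
    simp [this, Ip]
  | succ m' =>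
    have hqd : q.degree ≤ (m' : ℕ) := by
      rw [Polynomial.degree_le_iff_coeff_zero]
      intro b hb
      refine Polynomial.coeff_eq_zero_of_degree_lt (lt_of_lt_of_le hq ?_)
      have : m' < b := by exact_mod_cast hb
      exact_mod_cast Nat.succ_le_of_lt this
    obtain ⟨c, hc⟩ := span_phi φ hdeg hlead m' q hqd
    rw [hc, Ip_sum_right μ hμT]
    refine Finset.sum_eq_zero fun k _ => ?_
    rw [Ip_smul_right, Ip_phi μ φ horth]
    have : m' + 1 ≠ (k : ℕ) := by omega
    simp [this]

lemma orth_lt' (hμT : μ (Metric.sphere (0 : ℂ) 1)ᶜ = 0)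
    (hdeg : ∀ k, (φ k).degree = (k : ℕ))
    (hlead : ∀ k, 0 < ((φ k).leadingCoeff).re ∧ ((φ k).leadingCoeff).im = 0)
    (horth : ∀ k m, ∫ z, (φ k).eval z * conj ((φ m).eval z) ∂μ = if k = m then 1 else 0)
    (m : ℕ) (q : Polynomial ℂ) (hq : q.degree < (m : ℕ)) : Ip μ q (φ m) = 0 := by
  rw [Ip_conj, orth_lt μ φ hμT hdeg hlead horth m q hq, map_zero]

/-- Nondegeneracy of the `L²(μ)` inner product on polynomials. -/
lemma zero_of_orth (hμT : μ (Metric.sphere (0 : ℂ) 1)ᶜ = 0)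
    (hμinf : ∀ s : Finset ℂ, μ ((s : Set ℂ)ᶜ) ≠ 0)
    (d : ℕ) (s : Polynomial ℂ) (hsd : s.natDegree ≤ d)
    (h : ∀ k ≤ d, Ip μ s (Polynomial.X ^ k) = 0) : s = 0 := by
  have hss : Ip μ s s = 0 := by
    have hrep : s = ∑ k ∈ Finset.range (d + 1), Polynomial.monomial k (s.coeff k) :=
      s.as_sum_range' (d + 1) (Nat.lt_succ_of_le hsd)
    nth_rewrite 2 [hrep]
    rw [Ip_sum_right μ hμT]
    refine Finset.sum_eq_zero fun k hk => ?_
    rw [← Polynomial.C_mul_X_pow_eq_monomial, Ip_Cmul_right,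
      h k (Nat.lt_succ_iff.1 (Finset.mem_range.1 hk)), mul_zero]
  have hre : Ip μ s s = ((∫ z, Complex.normSq (s.eval z) ∂μ : ℝ) : ℂ) := by
    rw [Ip]
    calc ∫ z, s.eval z * conj (s.eval z) ∂μ
        = ∫ z, ((Complex.normSq (s.eval z) : ℝ) : ℂ) ∂μ := by
          congr 1; ext z; rw [Complex.mul_conj]
      _ = ((∫ z, Complex.normSq (s.eval z) ∂μ : ℝ) : ℂ) := integral_ofReal
  have hint : (∫ z, Complex.normSq (s.eval z) ∂μ) = 0 := by
    have := hre.symm.trans hss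
    exact_mod_cast this
  have hae : (fun z => Complex.normSq (s.eval z)) =ᵐ[μ] 0 := by
    refine (integral_eq_zero_iff_of_nonneg (fun z => Complex.normSq_nonneg _) ?_).1 hint
    exact integ μ hμT (Complex.continuous_normSq.comp s.continuous)
  by_contra hs
  have hz : μ {z : ℂ | s.eval z ≠ 0} = 0 := by
    have : {z : ℂ | s.eval z ≠ 0} ⊆ {z : ℂ | ¬ (Complex.normSq (s.eval z) = 0)} := by
      intro z hz
      simpa [Complex.normSq_eq_zero] using hz
    have hae' : ∀ᵐ z ∂μ, Complex.normSq (s.eval z) = 0 := by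
      filter_upwards [hae] with z h using by simpa using h
    exact measure_mono_null this (ae_iff.1 hae')
  refine hμinf s.roots.toFinset ?_
  refine measure_mono_null ?_ hz
  intro z hzmem
  simp only [Set.mem_compl_iff, Finset.coe_sort_coe, Finset.mem_coe,
    Multiset.mem_toFinset, Polynomial.mem_roots, Set.mem_setOf_eq] at hzmem ⊢
  intro he
  exact hzmem (Polynomial.mem_roots'.2 ⟨hs, he⟩)

/-- The reversed (Szegő-star) polynomial `φ*_n`. -/
noncomputable def phistar (n : ℕ) : Polynomial ℂ :=
  ∑ j ∈ Finset.range (n + 1), Polynomial.C (conj ((φ n).coeff j)) * Polynomial.X ^ (n - j)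

lemma phistar_degree (n : ℕ) : (phistar φ n).degree ≤ (n : ℕ) := by
  refine le_trans (Polynomial.degree_sum_le _ _) ?_
  refine Finset.sup_le fun j hj => ?_
  refine le_trans (Polynomial.degree_C_mul_X_pow_le _ _) ?_
  exact_mod_cast Nat.sub_le n j

lemma phistar_coeff0 (hdeg : ∀ k, (φ k).degree = (k : ℕ)) (n : ℕ) :
    (phistar φ n).coeff 0 = conj ((φ n).leadingCoeff) := by
  rw [phistar, Polynomial.finset_sum_coeff]
  rw [Finset.sum_eq_single n]
  · simp [Polynomial.coeff_C_mul, Polynomial.coeff_X_pow, Polynomial.leadingCoeff,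
      natDeg_phi φ hdeg n]
  · intro j hj hjn
    have hj' : j < n + 1 := Finset.mem_range.1 hj
    have : n - j ≠ 0 := by omega
    simp [Polynomial.coeff_C_mul, Polynomial.coeff_X_pow, this, Ne.symm this]
  · intro h
    exact absurd (Finset.self_mem_range_succ n) h

lemma phistar_eval (hdeg : ∀ k, (φ k).degree = (k : ℕ)) (n : ℕ) {z : ℂ} (hz : ‖z‖ = 1) :
    (phistar φ n).eval z = z ^ n * conj ((φ n).eval z) := by
  have hev : (φ n).eval z = ∑ j ∈ Finset.range (n + 1), (φ n).coeff j * z ^ j :=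
    Polynomial.eval_eq_sum_range' (by rw [natDeg_phi φ hdeg n]; omega) z
  rw [phistar, Polynomial.eval_finset_sum, hev, map_sum, Finset.mul_sum]
  refine Finset.sum_congr rfl fun j hj => ?_
  have hj' : j ≤ n := Nat.lt_succ_iff.1 (Finset.mem_range.1 hj)
  simp only [Polynomial.eval_mul, Polynomial.eval_C, Polynomial.eval_pow, Polynomial.eval_X,
    map_mul, map_pow]
  have h1 : z ^ n * (conj z) ^ j = z ^ (n - j) := by
    have : z ^ n = z ^ (n - j) * z ^ j := by rw [← pow_add, Nat.sub_add_cancel hj']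
    rw [this, mul_assoc, ← mul_pow, unit_mul hz, one_pow, mul_one]
  calc conj ((φ n).coeff j) * z ^ (n - j)
      = conj ((φ n).coeff j) * (z ^ n * (conj z) ^ j) := by rw [h1]
    _ = z ^ n * (conj ((φ n).coeff j) * (conj z) ^ j) := by ring

lemma Ip_phistar_pow (hμT : μ (Metric.sphere (0 : ℂ) 1)ᶜ = 0)
    (hdeg : ∀ k, (φ k).degree = (k : ℕ)) (n m : ℕ) (hm : m ≤ n) :
    Ip μ (phistar φ n) (Polynomial.X ^ m) = conj (Ip μ (φ n) (Polynomial.X ^ (n - m))) := by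
  rw [Ip, Ip, ← integral_conj]
  refine integral_congr_ae ?_
  filter_upwards [ae_sphere μ hμT] with z hz
  rw [phistar_eval φ hdeg n hz]
  simp only [Polynomial.eval_pow, Polynomial.eval_X, map_mul, map_pow, Complex.conj_conj]
  have h1 : z ^ n * (conj z) ^ m = z ^ (n - m) := by
    have : z ^ n = z ^ (n - m) * z ^ m := by rw [← pow_add, Nat.sub_add_cancel hm]
    rw [this, mul_assoc, ← mul_pow, unit_mul hz, one_pow, mul_one]
  calc z ^ n * conj ((φ n).eval z) * (conj z) ^ m
      = (z ^ n * (conj z) ^ m) * conj ((φ n).eval z) := by ring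
    _ = conj ((φ n).eval z) * z ^ (n - m) := by rw [h1]; ring

lemma Ip_phistar_phistar (hμT : μ (Metric.sphere (0 : ℂ) 1)ᶜ = 0)
    (hdeg : ∀ k, (φ k).degree = (k : ℕ))
    (horth : ∀ k m, ∫ z, (φ k).eval z * conj ((φ m).eval z) ∂μ = if k = m then 1 else 0)
    (n : ℕ) : Ip μ (phistar φ n) (phistar φ n) = 1 := by
  have : Ip μ (phistar φ n) (phistar φ n) = Ip μ (φ n) (φ n) := by
    rw [Ip, Ip]
    refine integral_congr_ae ?_
    filter_upwards [ae_sphere μ hμT] with z hz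
    rw [phistar_eval φ hdeg n hz]
    simp only [map_mul, map_pow, Complex.conj_conj]
    calc z ^ n * conj ((φ n).eval z) * ((conj z) ^ n * (φ n).eval z)
        = (z * conj z) ^ n * ((φ n).eval z * conj ((φ n).eval z)) := by rw [mul_pow]; ring
      _ = (φ n).eval z * conj ((φ n).eval z) := by rw [unit_mul hz, one_pow, one_mul]
  rw [this, Ip_phi μ φ horth]
  simp

/-- The Szegő recurrence: `z φ_n = d φ_{n+1} + c φ*_n` with `d = κ_n/κ_{n+1}`. -/
lemma szego (hμT : μ (Metric.sphere (0 : ℂ) 1)ᶜ = 0)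
    (hμinf : ∀ s : Finset ℂ, μ ((s : Set ℂ)ᶜ) ≠ 0)
    (hdeg : ∀ k, (φ k).degree = (k : ℕ))
    (hlead : ∀ k, 0 < ((φ k).leadingCoeff).re ∧ ((φ k).leadingCoeff).im = 0)
    (horth : ∀ k m, ∫ z, (φ k).eval z * conj ((φ m).eval z) ∂μ = if k = m then 1 else 0)
    (n : ℕ) :
    ∃ cc : ℂ, Polynomial.X * φ n =
      Polynomial.C ((φ n).leadingCoeff / (φ (n + 1)).leadingCoeff) * φ (n + 1) +
        Polynomial.C cc * phistar φ n := by
  have hXφ : (Polynomial.X * φ n).degree ≤ ((n + 1 : ℕ) : WithBot ℕ) := by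
    refine le_trans (Polynomial.degree_mul_le _ _) ?_
    rw [Polynomial.degree_X, hdeg n]
    exact_mod_cast le_of_eq (by push_cast; ring)
  obtain ⟨e, he⟩ := span_phi φ hdeg hlead (n + 1) (Polynomial.X * φ n) hXφ
  set dd : ℂ := e (Fin.last (n + 1)) with hdd0
  set p : Polynomial ℂ := ∑ k : Fin (n + 1), e k.castSucc • φ (k : ℕ) with hp0
  have hsplit : Polynomial.X * φ n = p + dd • φ (n + 1) := by
    rw [he, Fin.sum_univ_castSucc]
    simp only [Fin.coe_castSucc, Fin.val_last, hp0]
    rfl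
  have hpd : p.degree ≤ (n : ℕ) := by
    refine le_trans (Polynomial.degree_sum_le _ _) ?_
    refine Finset.sup_le fun k _ => ?_
    refine le_trans (Polynomial.degree_smul_le _ _) ?_
    rw [hdeg]
    exact_mod_cast Nat.lt_succ_iff.1 k.isLt
  have hXcoeff : (Polynomial.X * φ n).coeff (n + 1) = (φ n).leadingCoeff := by
    rw [Polynomial.coeff_X_mul, Polynomial.leadingCoeff, natDeg_phi φ hdeg n]
  have hdd : dd = (φ n).leadingCoeff / (φ (n + 1)).leadingCoeff := by
    have hc := congrArg (fun q : Polynomial ℂ => q.coeff (n + 1)) hsplit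
    simp only [Polynomial.coeff_add, Polynomial.coeff_smul, smul_eq_mul] at hc
    rw [hXcoeff, Polynomial.coeff_eq_zero_of_degree_lt
      (lt_of_le_of_lt hpd (by exact_mod_cast Nat.lt_succ_self n))] at hc
    have hl : (φ (n + 1)).coeff (n + 1) = (φ (n + 1)).leadingCoeff := by
      rw [Polynomial.leadingCoeff, natDeg_phi φ hdeg (n + 1)]
    rw [hl, zero_add] at hc
    rw [eq_div_iff (leadingCoeff_ne φ hlead (n + 1))]
    exact hc.symm
  have hp' : p = Polynomial.X * φ n - dd • φ (n + 1) := by rw [hsplit]; ring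
  have hpo : ∀ m, 1 ≤ m → m ≤ n → Ip μ p (Polynomial.X ^ m) = 0 := by
    intro m h1 h2
    rw [hp', Ip_sub_left μ hμT]
    have hA : Ip μ (Polynomial.X * φ n) (Polynomial.X ^ m) = 0 := by
      obtain ⟨m', rfl⟩ : ∃ m', m = m' + 1 := ⟨m - 1, by omega⟩
      rw [pow_succ', Ip_shift μ hμT]
      exact orth_lt μ φ hμT hdeg hlead horth n (Polynomial.X ^ m')
        (by rw [Polynomial.degree_X_pow]; exact_mod_cast (by omega : m' < n))
    have hB : Ip μ (dd • φ (n + 1)) (Polynomial.X ^ m) = 0 := by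
      rw [Ip_smul_left, orth_lt μ φ hμT hdeg hlead horth (n + 1) (Polynomial.X ^ m)
        (by rw [Polynomial.degree_X_pow]; exact_mod_cast (by omega : m < n + 1)), mul_zero]
    rw [hA, hB, sub_zero]
  have hso : ∀ m, 1 ≤ m → m ≤ n → Ip μ (phistar φ n) (Polynomial.X ^ m) = 0 := by
    intro m h1 h2
    rw [Ip_phistar_pow μ φ hμT hdeg n m h2,
      orth_lt μ φ hμT hdeg hlead horth n (Polynomial.X ^ (n - m))
        (by rw [Polynomial.degree_X_pow]; exact_mod_cast (by omega : n - m < n)), map_zero]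
  set A : ℂ := (phistar φ n).coeff 0 with hA0
  have hAne : A ≠ 0 := by
    rw [hA0, phistar_coeff0 φ hdeg n]
    intro h
    apply leadingCoeff_ne φ hlead n
    have := congrArg conj h
    simpa using this
  set r : Polynomial ℂ := Polynomial.C A * p - Polynomial.C (p.coeff 0) * phistar φ n with hr0def
  have hr0 : r.coeff 0 = 0 := by
    simp only [hr0def, Polynomial.coeff_sub, Polynomial.coeff_C_mul]
    ring
  have hrd : r.natDegree ≤ n := by
    refine Polynomial.natDegree_le_iff_degree_le.2 ?_
    refine le_trans (Polynomial.degree_sub_le _ _) ?_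
    refine max_le ?_ ?_
    · exact le_trans (degree_C_mul_le' _ _) hpd
    · exact le_trans (degree_C_mul_le' _ _) (phistar_degree φ n)
  have hro : ∀ m, 1 ≤ m → m ≤ n → Ip μ r (Polynomial.X ^ m) = 0 := by
    intro m h1 h2
    rw [hr0def, Ip_sub_left μ hμT, Ip_Cmul_left, Ip_Cmul_left, hpo m h1 h2, hso m h1 h2,
      mul_zero, mul_zero, sub_zero]
  have hr : r = 0 := by
    rcases Nat.eq_zero_or_pos n with hn | hn
    · have : r = Polynomial.C (r.coeff 0) :=
        Polynomial.eq_C_of_natDegree_le_zero (by omega)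
      rw [this, hr0, Polynomial.C_0]
    · have hrs : r = Polynomial.X * r.divX := by
        have h := r.X_mul_divX_add
        rw [hr0, Polynomial.C_0, add_zero] at h
        exact h.symm
      have htd : r.divX.natDegree ≤ n - 1 := by
        have := r.natDegree_divX_eq_natDegree_tsub_one
        omega
      have ht : r.divX = 0 := by
        refine zero_of_orth μ hμT hμinf (n - 1) r.divX htd fun k hk => ?_
        have hshift : Ip μ r (Polynomial.X ^ (k + 1)) = Ip μ r.divX (Polynomial.X ^ k) := by
          conv_lhs => rw [hrs]
          rw [pow_succ', Ip_shift μ hμT]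
        rw [← hshift]
        exact hro (k + 1) (by omega) (by omega)
      rw [hrs, ht, mul_zero]
  have hCAp : Polynomial.C A * p = Polynomial.C (p.coeff 0) * phistar φ n := by
    rw [← sub_eq_zero]
    exact hr
  have hp2 : p = Polynomial.C (p.coeff 0 / A) * phistar φ n := by
    calc p = Polynomial.C A⁻¹ * (Polynomial.C A * p) := by
          rw [← mul_assoc, ← Polynomial.C_mul, inv_mul_cancel₀ hAne, Polynomial.C_1, one_mul]
      _ = Polynomial.C A⁻¹ * (Polynomial.C (p.coeff 0) * phistar φ n) := by rw [hCAp]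
      _ = Polynomial.C (p.coeff 0 / A) * phistar φ n := by
          rw [← mul_assoc, ← Polynomial.C_mul]
          congr 2
          field_simp
  obtain ⟨cc, hcc⟩ : ∃ cc, p = Polynomial.C cc * phistar φ n := ⟨_, hp2⟩
  refine ⟨cc, ?_⟩
  rw [hsplit, hcc, hdd, smul_eq_C_mul]
  ring

lemma szegoT (hμT : μ (Metric.sphere (0 : ℂ) 1)ᶜ = 0)
    (hμinf : ∀ s : Finset ℂ, μ ((s : Set ℂ)ᶜ) ≠ 0)
    (hdeg : ∀ k, (φ k).degree = (k : ℕ))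
    (hlead : ∀ k, 0 < ((φ k).leadingCoeff).re ∧ ((φ k).leadingCoeff).im = 0)
    (horth : ∀ k m, ∫ z, (φ k).eval z * conj ((φ m).eval z) ∂μ = if k = m then 1 else 0)
    (n : ℕ) :
    ∃ d c : ℂ, d ≠ 0 ∧ d * conj d + c * conj c = 1 ∧
      (∀ z : ℂ, ‖z‖ = 1 →
        z * (φ n).eval z = d * (φ (n + 1)).eval z + c * (phistar φ n).eval z) ∧
      (∀ z : ℂ, ‖z‖ = 1 →
        (phistar φ n).eval z
          = conj d * (phistar φ (n + 1)).eval z + conj c * (z * (φ n).eval z)) := by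
  obtain ⟨c, hrec⟩ := szego μ φ hμT hμinf hdeg hlead horth n
  set d : ℂ := (φ n).leadingCoeff / (φ (n + 1)).leadingCoeff with hd0
  have hdne : d ≠ 0 := div_ne_zero (leadingCoeff_ne φ hlead n) (leadingCoeff_ne φ hlead (n + 1))
  have horthps : Ip μ (φ (n + 1)) (phistar φ n) = 0 :=
    orth_lt μ φ hμT hdeg hlead horth (n + 1) (phistar φ n)
      (lt_of_le_of_lt (phistar_degree φ n) (by exact_mod_cast Nat.lt_succ_self n))
  have horthps' : Ip μ (phistar φ n) (φ (n + 1)) = 0 :=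
    orth_lt' μ φ hμT hdeg hlead horth (n + 1) (phistar φ n)
      (lt_of_le_of_lt (phistar_degree φ n) (by exact_mod_cast Nat.lt_succ_self n))
  have hnorm : d * conj d + c * conj c = 1 := by
    have h1 : Ip μ (Polynomial.X * φ n) (Polynomial.X * φ n) = 1 := by
      rw [Ip_shift μ hμT, Ip_phi μ φ horth]; simp
    rw [hrec] at h1
    simp [Ip_add_left μ hμT, Ip_add_right μ hμT, Ip_Cmul_left, Ip_Cmul_right,
      Ip_phi μ φ horth, Ip_phistar_phistar μ φ hμT hdeg horth, horthps, horthps'] at h1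
    linear_combination h1
  have hE1 : ∀ z : ℂ, ‖z‖ = 1 →
      z * (φ n).eval z = d * (φ (n + 1)).eval z + c * (phistar φ n).eval z := by
    intro z _
    have := congrArg (fun q : Polynomial ℂ => q.eval z) hrec
    simpa using this
  refine ⟨d, c, hdne, hnorm, hE1, ?_⟩
  intro z hz
  have hzz : z * conj z = 1 := unit_mul hz
  set u : ℂ := (φ n).eval z with hu
  set U : ℂ := (φ (n + 1)).eval z with hU
  have hpsn : (phistar φ n).eval z = z ^ n * conj u := phistar_eval φ hdeg n hz
  have hpsn1 : (phistar φ (n + 1)).eval z = z ^ (n + 1) * conj U := phistar_eval φ hdeg (n + 1) hz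
  have hE1' : z * u = d * U + c * (z ^ n * conj u) := by rw [← hpsn]; exact hE1 z hz
  have hc1 : conj z * conj u = conj d * conj U + conj c * ((conj z) ^ n * u) := by
    have := congrArg conj hE1'
    simpa [map_add, map_mul, map_pow] using this
  have h1 : z ^ (n + 1) * conj z = z ^ n := by rw [pow_succ, mul_assoc, hzz, mul_one]
  have h2 : z ^ (n + 1) * (conj z) ^ n = z := by
    rw [pow_succ', mul_assoc, ← mul_pow, hzz, one_pow, mul_one]
  rw [hpsn, hpsn1]
  calc z ^ n * conj u = (z ^ (n + 1) * conj z) * conj u := by rw [h1]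
    _ = z ^ (n + 1) * (conj z * conj u) := by ring
    _ = z ^ (n + 1) * (conj d * conj U + conj c * ((conj z) ^ n * u)) := by rw [hc1]
    _ = conj d * (z ^ (n + 1) * conj U) + conj c * ((z ^ (n + 1) * (conj z) ^ n) * u) := by ring
    _ = conj d * (z ^ (n + 1) * conj U) + conj c * (z * u) := by rw [h2]

lemma stepA (hμT : μ (Metric.sphere (0 : ℂ) 1)ᶜ = 0)
    (hμinf : ∀ s : Finset ℂ, μ ((s : Set ℂ)ᶜ) ≠ 0)
    (hdeg : ∀ k, (φ k).degree = (k : ℕ))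
    (hlead : ∀ k, 0 < ((φ k).leadingCoeff).re ∧ ((φ k).leadingCoeff).im = 0)
    (horth : ∀ k m, ∫ z, (φ k).eval z * conj ((φ m).eval z) ∂μ = if k = m then 1 else 0)
    (n : ℕ) (w z : ℂ) (hw : ‖w‖ = 1) (hz : ‖z‖ = 1) :
    conj ((phistar φ (n + 1)).eval w) * (phistar φ (n + 1)).eval z
        - conj ((φ (n + 1)).eval w) * (φ (n + 1)).eval z
      = conj ((phistar φ n).eval w) * (phistar φ n).eval z
        - conj w * z * (conj ((φ n).eval w) * (φ n).eval z) := by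
  obtain ⟨d, c, hdne, hnorm, hE1, hE2⟩ := szegoT μ φ hμT hμinf hdeg hlead horth n
  have e1 : d * ((φ (n + 1)).eval z) = z * ((φ n).eval z) - c * ((phistar φ n).eval z) := by
    linear_combination (hE1 z hz).symm
  have e1w : conj d * conj ((φ (n + 1)).eval w)
      = conj w * conj ((φ n).eval w) - conj c * conj ((phistar φ n).eval w) := by
    have := congrArg conj (hE1 w hw)
    simp only [map_add, map_mul] at this
    linear_combination this.symm
  have e2 : conj d * ((phistar φ (n + 1)).eval z)
      = (phistar φ n).eval z - conj c * (z * ((φ n).eval z)) := by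
    linear_combination -(hE2 z hz)
  have e2w : d * conj ((phistar φ (n + 1)).eval w)
      = conj ((phistar φ n).eval w) - c * (conj w * conj ((φ n).eval w)) := by
    have := congrArg conj (hE2 w hw)
    simp only [map_add, map_mul, Complex.conj_conj] at this
    linear_combination -this
  have hdd : d * conj d ≠ 0 := mul_ne_zero hdne (by simpa using hdne)
  have hnorm' : d * conj d + c * conj c = 1 := hnorm
  exact stepA_core d (conj d) c (conj c) z (conj w) _ _ _ _ _ _ _ _ hdd hnorm' e1 e1w e2 e2w

lemma CD (hμT : μ (Metric.sphere (0 : ℂ) 1)ᶜ = 0)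
    (hμinf : ∀ s : Finset ℂ, μ ((s : Set ℂ)ᶜ) ≠ 0)
    (hdeg : ∀ k, (φ k).degree = (k : ℕ))
    (hlead : ∀ k, 0 < ((φ k).leadingCoeff).re ∧ ((φ k).leadingCoeff).im = 0)
    (horth : ∀ k m, ∫ z, (φ k).eval z * conj ((φ m).eval z) ∂μ = if k = m then 1 else 0)
    (n : ℕ) (w z : ℂ) (hw : ‖w‖ = 1) (hz : ‖z‖ = 1) :
    (1 - conj w * z) * christoffelK φ n w z
      = conj ((phistar φ (n + 1)).eval w) * (phistar φ (n + 1)).eval z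
        - conj ((φ (n + 1)).eval w) * (φ (n + 1)).eval z := by
  induction n with
  | zero =>
    rw [stepA μ φ hμT hμinf hdeg hlead horth 0 w z hw hz]
    have hφ0 : φ 0 = Polynomial.C ((φ 0).coeff 0) :=
      Polynomial.eq_C_of_degree_le_zero (le_of_eq (by simpa using hdeg 0))
    have hps0 : ∀ t : ℂ, ‖t‖ = 1 → (phistar φ 0).eval t = conj ((φ 0).eval t) := by
      intro t ht
      rw [phistar_eval φ hdeg 0 ht, pow_zero, one_mul]
    have ha : conj ((φ 0).coeff 0) = (φ 0).coeff 0 := by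
      have h1 : (φ 0).coeff 0 = (φ 0).leadingCoeff := by
        rw [Polynomial.leadingCoeff, natDeg_phi φ hdeg 0]
      rw [h1, Complex.conj_eq_iff_im]
      exact (hlead 0).2
    have hK0 : christoffelK φ 0 w z = conj ((φ 0).eval w) * (φ 0).eval z := by
      simp [christoffelK]
    rw [hps0 w hw, hps0 z hz, hK0]
    conv_lhs => rw [hφ0]
    conv_rhs => rw [hφ0]
    simp only [Polynomial.eval_C, Complex.conj_conj, ha]
    ring
  | succ n ih =>
    have hstep := stepA μ φ hμT hμinf hdeg hlead horth (n + 1) w z hw hz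
    have hK : christoffelK φ (n + 1) w z
        = christoffelK φ n w z + conj ((φ (n + 1)).eval w) * (φ (n + 1)).eval z := by
      rw [christoffelK, christoffelK, Finset.sum_range_succ]
    rw [hK, hstep]
    linear_combination ih

lemma eq_of_conj_mul_eq_one {t z : ℂ} (ht : ‖t‖ = 1) (h : conj t * z = 1) : z = t := by
  have h1 : t * (conj t * z) = t * 1 := by rw [h]
  rwa [← mul_assoc, unit_mul ht, one_mul, mul_one] at h1

lemma sphere_infinite (hμT : μ (Metric.sphere (0 : ℂ) 1)ᶜ = 0)
    (hμinf : ∀ s : Finset ℂ, μ ((s : Set ℂ)ᶜ) ≠ 0) :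
    (Metric.sphere (0 : ℂ) 1).Infinite := by
  by_contra h
  rw [Set.not_infinite] at h
  exact hμinf h.toFinset (by rw [Set.Finite.coe_toFinset]; exact hμT)

/-- The Christoffel kernel as a polynomial in the second variable. -/
noncomputable def kpoly (n : ℕ) (w : ℂ) : Polynomial ℂ :=
  ∑ m ∈ Finset.range (n + 1), Polynomial.C (conj ((φ m).eval w)) * φ m

lemma kpoly_eval (n : ℕ) (w z : ℂ) : (kpoly φ n w).eval z = christoffelK φ n w z := by
  simp [kpoly, christoffelK, Polynomial.eval_finset_sum]

lemma kpoly_degree (hdeg : ∀ k, (φ k).degree = (k : ℕ)) (n : ℕ) (w : ℂ) :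
    (kpoly φ n w).degree ≤ (n : ℕ) := by
  refine le_trans (Polynomial.degree_sum_le _ _) ?_
  refine Finset.sup_le fun m hm => ?_
  refine le_trans (degree_C_mul_le' _ _) ?_
  rw [hdeg m]
  exact_mod_cast Nat.lt_succ_iff.1 (Finset.mem_range.1 hm)

lemma phi0_ne (hdeg : ∀ k, (φ k).degree = (k : ℕ))
    (hlead : ∀ k, 0 < ((φ k).leadingCoeff).re ∧ ((φ k).leadingCoeff).im = 0)
    (t : ℂ) : (φ 0).eval t ≠ 0 := by
  have hφ0 : φ 0 = Polynomial.C ((φ 0).coeff 0) :=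
    Polynomial.eq_C_of_degree_le_zero (le_of_eq (by simpa using hdeg 0))
  rw [hφ0, Polynomial.eval_C]
  have h1 : (φ 0).coeff 0 = (φ 0).leadingCoeff := by
    rw [Polynomial.leadingCoeff, natDeg_phi φ hdeg 0]
  rw [h1]
  exact leadingCoeff_ne φ hlead 0

lemma kdiag_real (hdeg : ∀ k, (φ k).degree = (k : ℕ))
    (hlead : ∀ k, 0 < ((φ k).leadingCoeff).re ∧ ((φ k).leadingCoeff).im = 0)
    (n : ℕ) (t : ℂ) :
    christoffelK φ n t t
      = ((∑ j ∈ Finset.range (n + 1), Complex.normSq ((φ j).eval t) : ℝ) : ℂ) := by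
  rw [christoffelK]
  push_cast
  exact Finset.sum_congr rfl fun j _ => by
    rw [← Complex.normSq_eq_conj_mul_self]

lemma kdiag_pos (hdeg : ∀ k, (φ k).degree = (k : ℕ))
    (hlead : ∀ k, 0 < ((φ k).leadingCoeff).re ∧ ((φ k).leadingCoeff).im = 0)
    (n : ℕ) (t : ℂ) :
    0 < (christoffelK φ n t t).re ∧ (christoffelK φ n t t).im = 0 := by
  rw [kdiag_real φ hdeg hlead n t]
  constructor
  · simp only [Complex.ofReal_re]
    refine Finset.sum_pos' (fun j _ => Complex.normSq_nonneg _) ⟨0, Finset.mem_range.2 (by omega), ?_⟩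
    exact Complex.normSq_pos.2 (phi0_ne φ hdeg hlead t)
  · simp

lemma kdiag_ne (hdeg : ∀ k, (φ k).degree = (k : ℕ))
    (hlead : ∀ k, 0 < ((φ k).leadingCoeff).re ∧ ((φ k).leadingCoeff).im = 0)
    (n : ℕ) (t : ℂ) : christoffelK φ n t t ≠ 0 := by
  intro h
  have := (kdiag_pos φ hdeg hlead n t).1
  rw [h] at this
  simp at this

lemma kdiag_conj (hdeg : ∀ k, (φ k).degree = (k : ℕ))
    (hlead : ∀ k, 0 < ((φ k).leadingCoeff).re ∧ ((φ k).leadingCoeff).im = 0)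
    (n : ℕ) (t : ℂ) : conj (christoffelK φ n t t) = christoffelK φ n t t :=
  Complex.conj_eq_iff_im.2 (kdiag_pos φ hdeg hlead n t).2

lemma phi_ne_on_T (hμT : μ (Metric.sphere (0 : ℂ) 1)ᶜ = 0)
    (hμinf : ∀ s : Finset ℂ, μ ((s : Set ℂ)ᶜ) ≠ 0)
    (hdeg : ∀ k, (φ k).degree = (k : ℕ))
    (hlead : ∀ k, 0 < ((φ k).leadingCoeff).re ∧ ((φ k).leadingCoeff).im = 0)
    (horth : ∀ k m, ∫ z, (φ k).eval z * conj ((φ m).eval z) ∂μ = if k = m then 1 else 0)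
    (n : ℕ) {t : ℂ} (ht : ‖t‖ = 1) : (φ (n + 1)).eval t ≠ 0 := by
  intro h0
  have hs0 : (phistar φ (n + 1)).eval t = 0 := by
    rw [phistar_eval φ hdeg (n + 1) ht, h0, map_zero, mul_zero]
  have hzero : ∀ z : ℂ, ‖z‖ = 1 → z ≠ t → christoffelK φ n t z = 0 := by
    intro z hz hzt
    have hcd := CD μ φ hμT hμinf hdeg hlead horth n t z ht hz
    rw [h0, hs0] at hcd
    simp only [map_zero, zero_mul, mul_zero, sub_zero] at hcd
    rcases mul_eq_zero.1 hcd with h | h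
    · exfalso
      apply hzt
      refine eq_of_conj_mul_eq_one ht ?_
      linear_combination -h
    · exact h
  have hQ : kpoly φ n t = 0 := by
    have hinf : ((Metric.sphere (0 : ℂ) 1) \ {t}).Infinite :=
      (sphere_infinite μ hμT hμinf).diff (Set.finite_singleton t)
    obtain ⟨s, hs_sub, hs_card⟩ := hinf.exists_subset_card_eq (n + 1)
    refine Polynomial.eq_zero_of_natDegree_lt_card_of_eval_eq_zero' _ s ?_ ?_
    · intro i hi
      have hmem := hs_sub hi
      rw [kpoly_eval]
      exact hzero i (by simpa [Metric.mem_sphere, dist_zero_right] using hmem.1) hmem.2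
    · rw [hs_card]
      exact Nat.lt_succ_of_le (Polynomial.natDegree_le_iff_degree_le.2 (kpoly_degree φ hdeg n t))
  apply kdiag_ne φ hdeg hlead n t
  rw [← kpoly_eval φ n t t, hQ, Polynomial.eval_zero]

lemma nodes_orth (hμT : μ (Metric.sphere (0 : ℂ) 1)ᶜ = 0)
    (hμinf : ∀ s : Finset ℂ, μ ((s : Set ℂ)ᶜ) ≠ 0)
    (hdeg : ∀ k, (φ k).degree = (k : ℕ))
    (hlead : ∀ k, 0 < ((φ k).leadingCoeff).re ∧ ((φ k).leadingCoeff).im = 0)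
    (horth : ∀ k m, ∫ z, (φ k).eval z * conj ((φ m).eval z) ∂μ = if k = m then 1 else 0)
    (n : ℕ) {w x y : ℂ} (hw : ‖w‖ = 1) (hx : ‖x‖ = 1) (hy : ‖y‖ = 1) (hxy : x ≠ y)
    (h0x : paraOrtho φ n w x = 0) (h0y : paraOrtho φ n w y = 0) :
    christoffelK φ n x y = 0 := by
  have hR : ∀ u : ℂ, ‖u‖ = 1 → paraOrtho φ n w u = 0 →
      conj ((phistar φ (n + 1)).eval w) * (phistar φ (n + 1)).eval u
        = conj ((φ (n + 1)).eval w) * (φ (n + 1)).eval u := by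
    intro u hu h0
    rw [paraOrtho] at h0
    rcases mul_eq_zero.1 h0 with h | h
    · have hut : u = w := by
        refine eq_of_conj_mul_eq_one hw ?_
        linear_combination -h
      subst hut
      rw [phistar_eval φ hdeg (n + 1) hu]
      have h2 : (u * conj u) ^ (n + 1) = 1 := by rw [unit_mul hu]; exact one_pow _
      calc conj (u ^ (n + 1) * conj ((φ (n + 1)).eval u)) * (u ^ (n + 1) * conj ((φ (n + 1)).eval u))
          = (u * conj u) ^ (n + 1) * (conj ((φ (n + 1)).eval u) * (φ (n + 1)).eval u) := by
            simp only [map_mul, map_pow, Complex.conj_conj]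
            rw [mul_pow]
            ring
        _ = conj ((φ (n + 1)).eval u) * (φ (n + 1)).eval u := by rw [h2, one_mul]
    · have hcd := CD μ φ hμT hμinf hdeg hlead horth n w u hw hu
      rw [h, mul_zero] at hcd
      linear_combination -hcd
  have hRx := hR x hx h0x
  have hRy := hR y hy h0y
  have hww : (φ (n + 1)).eval w * conj ((φ (n + 1)).eval w)
      = (phistar φ (n + 1)).eval w * conj ((phistar φ (n + 1)).eval w) := by
    rw [phistar_eval φ hdeg (n + 1) hw]
    have h2 : (w * conj w) ^ (n + 1) = 1 := by rw [unit_mul hw]; exact one_pow _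
    calc (φ (n + 1)).eval w * conj ((φ (n + 1)).eval w)
        = (w * conj w) ^ (n + 1) * ((φ (n + 1)).eval w * conj ((φ (n + 1)).eval w)) := by
          rw [h2, one_mul]
      _ = (w ^ (n + 1) * conj ((φ (n + 1)).eval w)) * conj (w ^ (n + 1) * conj ((φ (n + 1)).eval w)) := by
          simp only [map_mul, map_pow, Complex.conj_conj]
          rw [mul_pow]
          ring
  have hne : (φ (n + 1)).eval w * conj ((φ (n + 1)).eval w) ≠ 0 := by
    have h1 := phi_ne_on_T μ φ hμT hμinf hdeg hlead horth n hw
    exact mul_ne_zero h1 (by simpa using h1)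
  have hA : conj ((phistar φ (n + 1)).eval x) * (phistar φ (n + 1)).eval y
      = conj ((φ (n + 1)).eval x) * (φ (n + 1)).eval y := by
    have hx' : (phistar φ (n + 1)).eval w * conj ((phistar φ (n + 1)).eval x)
        = (φ (n + 1)).eval w * conj ((φ (n + 1)).eval x) := by
      have := congrArg conj hRx
      simpa [map_mul, Complex.conj_conj, mul_comm] using this
    apply mul_left_cancel₀ hne
    calc ((φ (n + 1)).eval w * conj ((φ (n + 1)).eval w))
          * (conj ((phistar φ (n + 1)).eval x) * (phistar φ (n + 1)).eval y)
        = ((phistar φ (n + 1)).eval w * conj ((phistar φ (n + 1)).eval x))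
          * (conj ((phistar φ (n + 1)).eval w) * (phistar φ (n + 1)).eval y) := by
          rw [hww]; ring
      _ = ((φ (n + 1)).eval w * conj ((φ (n + 1)).eval x))
          * (conj ((φ (n + 1)).eval w) * (φ (n + 1)).eval y) := by rw [hx', hRy]
      _ = ((φ (n + 1)).eval w * conj ((φ (n + 1)).eval w))
          * (conj ((φ (n + 1)).eval x) * (φ (n + 1)).eval y) := by ring
  have hcd := CD μ φ hμT hμinf hdeg hlead horth n x y hx hy
  rw [hA, sub_self] at hcd
  rcases mul_eq_zero.1 hcd with h | h
  · exfalso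
    apply hxy
    refine (eq_of_conj_mul_eq_one hx ?_).symm
    linear_combination -h
  · exact h

lemma cont_K (n : ℕ) (w : ℂ) : Continuous fun z : ℂ => christoffelK φ n w z := by
  have : (fun z : ℂ => christoffelK φ n w z) = fun z => (kpoly φ n w).eval z :=
    funext fun z => (kpoly_eval φ n w z).symm
  rw [this]
  exact Polynomial.continuous _

lemma kernel_int (hμT : μ (Metric.sphere (0 : ℂ) 1)ᶜ = 0)
    (horth : ∀ k m, ∫ z, (φ k).eval z * conj ((φ m).eval z) ∂μ = if k = m then 1 else 0)
    (n : ℕ) (a b : ℂ) :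
    ∫ z, christoffelK φ n a z * conj (christoffelK φ n b z) ∂μ = christoffelK φ n a b := by
  have h1 : (∫ z, christoffelK φ n a z * conj (christoffelK φ n b z) ∂μ)
      = Ip μ (kpoly φ n a) (kpoly φ n b) := by
    rw [Ip]
    congr 1; ext z; rw [kpoly_eval, kpoly_eval]
  rw [h1, christoffelK]
  rw [show kpoly φ n a = ∑ m ∈ Finset.range (n + 1), Polynomial.C (conj ((φ m).eval a)) * φ m
    from rfl]
  rw [Ip_sum_left μ hμT]
  refine Finset.sum_congr rfl fun j hj => ?_
  rw [Ip_Cmul_left, show kpoly φ n b = ∑ m ∈ Finset.range (n + 1),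
    Polynomial.C (conj ((φ m).eval b)) * φ m from rfl, Ip_sum_right μ hμT]
  rw [Finset.sum_eq_single j]
  · rw [Ip_Cmul_right, Ip_phi μ φ horth, Complex.conj_conj, if_pos rfl, mul_one]
  · intro k _ hkj
    rw [Ip_Cmul_right, Ip_phi μ φ horth, if_neg (Ne.symm hkj), mul_zero]
  · intro h
    exact absurd hj h

section Nodes

variable (hμT : μ (Metric.sphere (0 : ℂ) 1)ᶜ = 0)
  (hμinf : ∀ s : Finset ℂ, μ ((s : Set ℂ)ᶜ) ≠ 0)
  (hdeg : ∀ k, (φ k).degree = (k : ℕ))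
  (hlead : ∀ k, 0 < ((φ k).leadingCoeff).re ∧ ((φ k).leadingCoeff).im = 0)
  (horth : ∀ k m, ∫ z, (φ k).eval z * conj ((φ m).eval z) ∂μ = if k = m then 1 else 0)
  {n : ℕ} {w : ℂ} (hw : ‖w‖ = 1) {ζ : Fin (n + 1) → ℂ}
  (hζT : ∀ j, ‖ζ j‖ = 1) (hζinj : Function.Injective ζ)
  (hζ0 : ∀ j, paraOrtho φ n w (ζ j) = 0)

include hμT hμinf hdeg hlead horth hw hζT hζinj hζ0

omit hζinj in
lemma korth : ∀ j k : Fin (n + 1), j ≠ k → ζ j ≠ ζ k →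
    christoffelK φ n (ζ j) (ζ k) = 0 := by
  intro j k _ hne
  exact nodes_orth μ φ hμT hμinf hdeg hlead horth n hw (hζT j) (hζT k) hne (hζ0 j) (hζ0 k)

lemma ell_node : ∀ j k : Fin (n + 1), ellFun φ n ζ j (ζ k) = if j = k then 1 else 0 := by
  intro j k
  rcases eq_or_ne j k with rfl | hjk
  · rw [ellFun, div_self (kdiag_ne φ hdeg hlead n (ζ j)), if_pos rfl]
  · rw [ellFun, korth μ φ hμT hμinf hdeg hlead horth hw hζT hζ0 j k hjk
      (fun h => hjk (hζinj h)), zero_div, if_neg hjk]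

lemma reproduce (Q : Polynomial ℂ) (hQ : Q.degree ≤ (n : ℕ)) :
    ∀ z : ℂ, (∑ j : Fin (n + 1), Q.eval (ζ j) * ellFun φ n ζ j z) = Q.eval z := by
  set D : Polynomial ℂ :=
    (∑ j : Fin (n + 1),
      Polynomial.C (Q.eval (ζ j) / christoffelK φ n (ζ j) (ζ j)) * kpoly φ n (ζ j)) - Q with hD
  have hDeval : ∀ z : ℂ, D.eval z
      = (∑ j : Fin (n + 1), Q.eval (ζ j) * ellFun φ n ζ j z) - Q.eval z := by
    intro z
    simp only [hD, Polynomial.eval_sub, Polynomial.eval_finset_sum, Polynomial.eval_mul,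
      Polynomial.eval_C]
    congr 1
    refine Finset.sum_congr rfl fun j _ => ?_
    rw [kpoly_eval, ellFun, div_mul_eq_mul_div, mul_div_assoc]
  have hDroot : ∀ k, D.eval (ζ k) = 0 := by
    intro k
    rw [hDeval]
    have : ∀ j, Q.eval (ζ j) * ellFun φ n ζ j (ζ k)
        = if j = k then Q.eval (ζ k) else 0 := by
      intro j
      rw [ell_node μ φ hμT hμinf hdeg hlead horth hw hζT hζinj hζ0 j k]
      rcases eq_or_ne j k with rfl | h
      · simp
      · simp [h]
    rw [Finset.sum_congr rfl fun j _ => this j]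
    simp
  have hDdeg : D.natDegree ≤ n := by
    refine Polynomial.natDegree_le_iff_degree_le.2 ?_
    refine le_trans (Polynomial.degree_sub_le _ _) (max_le ?_ hQ)
    refine le_trans (Polynomial.degree_sum_le _ _) ?_
    refine Finset.sup_le fun j _ => ?_
    exact le_trans (degree_C_mul_le' _ _) (kpoly_degree φ hdeg n (ζ j))
  have hD0 : D = 0 := by
    refine Polynomial.eq_zero_of_natDegree_lt_card_of_eval_eq_zero D hζinj hDroot ?_
    rw [Fintype.card_fin]
    omega
  intro z
  have hz := hDeval z
  rw [hD0, Polynomial.eval_zero] at hz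
  exact sub_eq_zero.1 hz.symm

lemma cont_ell (j : Fin (n + 1)) : Continuous (ellFun φ n ζ j) := by
  have : ellFun φ n ζ j = fun z => christoffelK φ n (ζ j) z / christoffelK φ n (ζ j) (ζ j) :=
    rfl
  rw [this]
  exact (cont_K φ n (ζ j)).div_const _

lemma ell_int (j k : Fin (n + 1)) :
    ∫ z, ellFun φ n ζ j z * conj (ellFun φ n ζ k z) ∂μ
      = if j = k then (christoffelK φ n (ζ j) (ζ j))⁻¹ else 0 := by
  have h1 : (fun z => ellFun φ n ζ j z * conj (ellFun φ n ζ k z))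
      = fun z => ((christoffelK φ n (ζ j) (ζ j))⁻¹ * (conj (christoffelK φ n (ζ k) (ζ k)))⁻¹)
          * (christoffelK φ n (ζ j) z * conj (christoffelK φ n (ζ k) z)) := by
    ext z
    rw [ellFun, ellFun, map_div₀, div_eq_inv_mul, div_eq_inv_mul]
    ring
  rw [h1, integral_const_mul, kernel_int μ φ hμT horth n (ζ j) (ζ k)]
  rcases eq_or_ne j k with rfl | hjk
  · rw [if_pos rfl, kdiag_conj φ hdeg hlead n (ζ j)]
    field_simp
  · rw [if_neg hjk, korth μ φ hμT hμinf hdeg hlead horth hw hζT hζ0 j k hjk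
      (fun h => hjk (hζinj h)), mul_zero]

lemma quad_sum :
    (∑ j : Fin (n + 1), (christoffelK φ n (ζ j) (ζ j))⁻¹) = ((μ Set.univ).toReal : ℂ) := by
  have h1 : ∀ z : ℂ, (∑ j : Fin (n + 1), ellFun φ n ζ j z) = 1 := by
    intro z
    have := reproduce μ φ hμT hμinf hdeg hlead horth hw hζT hζinj hζ0 1
      (le_trans Polynomial.degree_one_le (by exact_mod_cast Nat.zero_le n)) z
    simpa using this
  have h2 : (∫ z, (1 : ℂ) ∂μ) = ((μ Set.univ).toReal : ℂ) := by
    rw [integral_const]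
    simp [Complex.real_smul]
    rfl
  have h3 : (∫ z, (1 : ℂ) ∂μ)
      = ∫ z, (∑ j : Fin (n + 1), ellFun φ n ζ j z)
          * conj (∑ k : Fin (n + 1), ellFun φ n ζ k z) ∂μ := by
    congr 1; ext z; rw [h1 z]; simp
  have h4 : (∫ z, (∑ j : Fin (n + 1), ellFun φ n ζ j z)
        * conj (∑ k : Fin (n + 1), ellFun φ n ζ k z) ∂μ)
      = ∑ j : Fin (n + 1), (christoffelK φ n (ζ j) (ζ j))⁻¹ := by
    have hexp : (fun z => (∑ j : Fin (n + 1), ellFun φ n ζ j z)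
        * conj (∑ k : Fin (n + 1), ellFun φ n ζ k z))
        = fun z => ∑ j : Fin (n + 1), ∑ k : Fin (n + 1),
            ellFun φ n ζ j z * conj (ellFun φ n ζ k z) := by
      ext z
      rw [map_sum, Finset.sum_mul_sum]
    rw [hexp, integral_finset_sum _ (fun j _ => ?_)]
    · refine Finset.sum_congr rfl fun j _ => ?_
      rw [integral_finset_sum _ (fun k _ => ?_)]
      · rw [Finset.sum_congr rfl fun k _ =>
          ell_int μ φ hμT hμinf hdeg hlead horth hw hζT hζinj hζ0 j k]
        simp
      · exact integ μ hμT ((cont_ell μ φ hμT hμinf hdeg hlead horth hw hζT hζinj hζ0 j).mul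
          (Complex.continuous_conj.comp (cont_ell μ φ hμT hμinf hdeg hlead horth hw hζT hζinj hζ0 k)))
    · refine integrable_finset_sum _ (fun k _ => ?_)
      exact integ μ hμT ((cont_ell μ φ hμT hμinf hdeg hlead horth hw hζT hζinj hζ0 j).mul
        (Complex.continuous_conj.comp (cont_ell μ φ hμT hμinf hdeg hlead horth hw hζT hζinj hζ0 k)))
  rw [← h4, ← h3, h2]


lemma key_estimate (f : ℂ → ℂ) (P : Polynomial ℂ) (hPdeg : P.degree ≤ (n : ℕ))
    (ε : ℝ) (hε : ∀ j, ‖f (ζ j) - P.eval (ζ j)‖ ≤ ε) :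
    ∫ z, ‖lagrangeInterp φ n ζ f z - P.eval z‖ ^ 2 ∂μ
      ≤ (μ Set.univ).toReal * ε ^ 2 := by
  have hG : ∀ z : ℂ, lagrangeInterp φ n ζ f z - P.eval z
      = ∑ j : Fin (n + 1), (f (ζ j) - P.eval (ζ j)) * ellFun φ n ζ j z := by
    intro z
    rw [lagrangeInterp, ← reproduce μ φ hμT hμinf hdeg hlead horth hw hζT hζinj hζ0 P hPdeg z,
      ← Finset.sum_sub_distrib]
    exact Finset.sum_congr rfl fun j _ => by ring
  have hcontG : Continuous fun z =>
      ∑ j : Fin (n + 1), (f (ζ j) - P.eval (ζ j)) * ellFun φ n ζ j z :=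
    continuous_finset_sum _ fun j _ => continuous_const.mul
      (cont_ell μ φ hμT hμinf hdeg hlead horth hw hζT hζinj hζ0 j)
  have hI : (∫ z, (∑ j : Fin (n + 1), (f (ζ j) - P.eval (ζ j)) * ellFun φ n ζ j z)
        * conj (∑ k : Fin (n + 1), (f (ζ k) - P.eval (ζ k)) * ellFun φ n ζ k z) ∂μ)
      = ∑ j : Fin (n + 1), (f (ζ j) - P.eval (ζ j)) * conj (f (ζ j) - P.eval (ζ j))
          * (christoffelK φ n (ζ j) (ζ j))⁻¹ := by
    have hexp : (fun z => (∑ j : Fin (n + 1), (f (ζ j) - P.eval (ζ j)) * ellFun φ n ζ j z)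
        * conj (∑ k : Fin (n + 1), (f (ζ k) - P.eval (ζ k)) * ellFun φ n ζ k z))
        = fun z => ∑ j : Fin (n + 1), ∑ k : Fin (n + 1),
            ((f (ζ j) - P.eval (ζ j)) * conj (f (ζ k) - P.eval (ζ k)))
              * (ellFun φ n ζ j z * conj (ellFun φ n ζ k z)) := by
      ext z
      rw [map_sum, Finset.sum_mul_sum]
      exact Finset.sum_congr rfl fun j _ => Finset.sum_congr rfl fun k _ => by
        rw [map_mul]; ring
    have hintjk : ∀ j k : Fin (n + 1), Integrable (fun z =>
        ((f (ζ j) - P.eval (ζ j)) * conj (f (ζ k) - P.eval (ζ k)))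
          * (ellFun φ n ζ j z * conj (ellFun φ n ζ k z))) μ := by
      intro j k
      refine Integrable.const_mul ?_ _
      exact integ μ hμT ((cont_ell μ φ hμT hμinf hdeg hlead horth hw hζT hζinj hζ0 j).mul
        (Complex.continuous_conj.comp (cont_ell μ φ hμT hμinf hdeg hlead horth hw hζT hζinj hζ0 k)))
    rw [hexp, integral_finset_sum _ (fun j _ => integrable_finset_sum _ (fun k _ => hintjk j k))]
    refine Finset.sum_congr rfl fun j _ => ?_
    rw [integral_finset_sum _ (fun k _ => hintjk j k)]
    have hterm : ∀ k : Fin (n + 1), (∫ z,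
        ((f (ζ j) - P.eval (ζ j)) * conj (f (ζ k) - P.eval (ζ k)))
          * (ellFun φ n ζ j z * conj (ellFun φ n ζ k z)) ∂μ)
        = if j = k then (f (ζ j) - P.eval (ζ j)) * conj (f (ζ j) - P.eval (ζ j))
            * (christoffelK φ n (ζ j) (ζ j))⁻¹ else 0 := by
      intro k
      rw [integral_const_mul, ell_int μ φ hμT hμinf hdeg hlead horth hw hζT hζinj hζ0 j k]
      rcases eq_or_ne j k with rfl | h
      · rw [if_pos rfl, if_pos rfl, mul_assoc]
      · rw [if_neg h, if_neg h, mul_zero]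
    rw [Finset.sum_congr rfl fun k _ => hterm k]
    simp
  have habs : ∀ z : ℂ, ‖lagrangeInterp φ n ζ f z - P.eval z‖ ^ 2
      = ((∑ j : Fin (n + 1), (f (ζ j) - P.eval (ζ j)) * ellFun φ n ζ j z)
        * conj (∑ k : Fin (n + 1), (f (ζ k) - P.eval (ζ k)) * ellFun φ n ζ k z)).re := by
    intro z
    rw [hG z, Complex.sq_norm, Complex.mul_conj, Complex.ofReal_re]
  have h5 : (∫ z, ‖lagrangeInterp φ n ζ f z - P.eval z‖ ^ 2 ∂μ)
      = (∑ j : Fin (n + 1), (f (ζ j) - P.eval (ζ j)) * conj (f (ζ j) - P.eval (ζ j))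
          * (christoffelK φ n (ζ j) (ζ j))⁻¹).re := by
    have hint : Integrable (fun z => (∑ j : Fin (n + 1), (f (ζ j) - P.eval (ζ j)) * ellFun φ n ζ j z)
        * conj (∑ k : Fin (n + 1), (f (ζ k) - P.eval (ζ k)) * ellFun φ n ζ k z)) μ := by
      apply integ μ hμT
      exact hcontG.mul (Complex.continuous_conj.comp hcontG)
    have h6 := integral_re hint
    simp only [RCLike.re_to_complex] at h6
    rw [← hI, ← h6]
    congr 1; ext z
    rw [habs z]
  rw [h5, Complex.re_sum]
  have hterm_re : ∀ j : Fin (n + 1),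
      ((f (ζ j) - P.eval (ζ j)) * conj (f (ζ j) - P.eval (ζ j))
        * (christoffelK φ n (ζ j) (ζ j))⁻¹).re
      = Complex.normSq (f (ζ j) - P.eval (ζ j)) * ((christoffelK φ n (ζ j) (ζ j))⁻¹).re := by
    intro j
    rw [Complex.mul_conj, Complex.re_ofReal_mul]
  have hinv_nonneg : ∀ j : Fin (n + 1), 0 ≤ ((christoffelK φ n (ζ j) (ζ j))⁻¹).re := by
    intro j
    rw [Complex.inv_re]
    exact div_nonneg (le_of_lt (kdiag_pos φ hdeg hlead n (ζ j)).1) (Complex.normSq_nonneg _)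
  have hsum_le : ∑ j : Fin (n + 1),
      ((f (ζ j) - P.eval (ζ j)) * conj (f (ζ j) - P.eval (ζ j))
        * (christoffelK φ n (ζ j) (ζ j))⁻¹).re
      ≤ ∑ j : Fin (n + 1), ε ^ 2 * ((christoffelK φ n (ζ j) (ζ j))⁻¹).re := by
    refine Finset.sum_le_sum fun j _ => ?_
    rw [hterm_re j]
    refine mul_le_mul_of_nonneg_right ?_ (hinv_nonneg j)
    rw [← Complex.sq_norm]
    exact pow_le_pow_left₀ (norm_nonneg _) (hε j) 2
  have hquad_re : ∑ j : Fin (n + 1), ((christoffelK φ n (ζ j) (ζ j))⁻¹).re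
      = (μ Set.univ).toReal := by
    have := congrArg Complex.re (quad_sum μ φ hμT hμinf hdeg hlead horth hw hζT hζinj hζ0)
    rwa [Complex.re_sum, Complex.ofReal_re] at this
  calc ∑ j : Fin (n + 1),
      ((f (ζ j) - P.eval (ζ j)) * conj (f (ζ j) - P.eval (ζ j))
        * (christoffelK φ n (ζ j) (ζ j))⁻¹).re
      ≤ ∑ j : Fin (n + 1), ε ^ 2 * ((christoffelK φ n (ζ j) (ζ j))⁻¹).re := hsum_le
    _ = ε ^ 2 * ∑ j : Fin (n + 1), ((christoffelK φ n (ζ j) (ζ j))⁻¹).re := by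
        rw [Finset.mul_sum]
    _ = (μ Set.univ).toReal * ε ^ 2 := by rw [hquad_re]; ring

end Nodes

end CD25

/-- **Key estimate in the proof of Theorem 2.** If `f` is in the disk algebra and `{P_n}` is a
sequence of polynomials with `deg P_n ≤ n` converging uniformly to `f` on `T`, then
`∫_T |L_n(f) − P_n|² dμ ≤ μ(T) · (max_{z∈T} |f(z) − P_n(z)|)²`, and consequently
`∫_T |f − L_n(f)|² dμ → 0` as `n → ∞`. -/
theorem lagrangeInterp_diskAlgebra_key_estimate
    (μ : Measure ℂ) [IsFiniteMeasure μ]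
    (hμT : μ (Metric.sphere (0 : ℂ) 1)ᶜ = 0)
    (hμinf : ∀ s : Finset ℂ, μ ((s : Set ℂ)ᶜ) ≠ 0)
    (φ : ℕ → Polynomial ℂ)
    (hdeg : ∀ k, (φ k).degree = (k : ℕ))
    (hlead : ∀ k, 0 < ((φ k).leadingCoeff).re ∧ ((φ k).leadingCoeff).im = 0)
    (horth : ∀ k m, ∫ z, (φ k).eval z * conj ((φ m).eval z) ∂μ
        = if k = m then 1 else 0)
    (w : ℕ → ℂ) (hw : ∀ n, w n ∈ Metric.sphere (0 : ℂ) 1)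
    (ζ : (n : ℕ) → Fin (n + 1) → ℂ)
    (hζT : ∀ n j, ζ n j ∈ Metric.sphere (0 : ℂ) 1)
    (hζinj : ∀ n, Function.Injective (ζ n))
    (hζ0 : ∀ n j, paraOrtho φ n (w n) (ζ n j) = 0)
    (f : ℂ → ℂ)
    (hfc : ContinuousOn f (Metric.closedBall (0 : ℂ) 1))
    (hfd : DifferentiableOn ℂ f (Metric.ball (0 : ℂ) 1))
    (P : ℕ → Polynomial ℂ) (hP : ∀ n, (P n).degree ≤ n)
    (hPf : Tendsto
      (fun n => sSup ((fun z => ‖f z - (P n).eval z‖) '' Metric.sphere (0 : ℂ) 1))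
      atTop (𝓝 0)) :
    (∀ n, ∫ z, ‖lagrangeInterp φ n (ζ n) f z - (P n).eval z‖ ^ 2 ∂μ
        ≤ (μ Set.univ).toReal *
          (sSup ((fun z => ‖f z - (P n).eval z‖) '' Metric.sphere (0 : ℂ) 1)) ^ 2) ∧
    Tendsto (fun n => ∫ z, ‖f z - lagrangeInterp φ n (ζ n) f z‖ ^ 2 ∂μ)
      atTop (𝓝 0) := by
  have hζnorm : ∀ n j, ‖ζ n j‖ = 1 := fun n j => by
    simpa [dist_zero_right] using hζT n j
  have hwnorm : ∀ n, ‖w n‖ = 1 := fun n => by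
    simpa [dist_zero_right] using hw n
  have hcontOn : ∀ n, ContinuousOn (fun z => ‖f z - (P n).eval z‖)
      (Metric.sphere (0 : ℂ) 1) := fun n =>
    continuous_norm.comp_continuousOn
      ((hfc.mono Metric.sphere_subset_closedBall).sub (Polynomial.continuous _).continuousOn)
  have hbdd : ∀ n, BddAbove
      ((fun z => ‖f z - (P n).eval z‖) '' Metric.sphere (0 : ℂ) 1) := fun n =>
    (isCompact_sphere (0 : ℂ) 1).bddAbove_image (hcontOn n)
  have hmem : ∀ n, ∀ z ∈ Metric.sphere (0 : ℂ) 1, ‖f z - (P n).eval z‖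
      ≤ sSup ((fun z => ‖f z - (P n).eval z‖) '' Metric.sphere (0 : ℂ) 1) :=
    fun n z hz => le_csSup (hbdd n) ⟨z, hz, rfl⟩
  have hpart1 : ∀ n, ∫ z, ‖lagrangeInterp φ n (ζ n) f z - (P n).eval z‖ ^ 2 ∂μ
      ≤ (μ Set.univ).toReal *
        (sSup ((fun z => ‖f z - (P n).eval z‖) '' Metric.sphere (0 : ℂ) 1)) ^ 2 :=
    fun n => CD25.key_estimate μ φ hμT hμinf hdeg hlead horth (hwnorm n) (hζnorm n)
      (hζinj n) (hζ0 n) f (P n) (hP n) _ (fun j => hmem n (ζ n j) (hζT n j))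
  refine ⟨hpart1, ?_⟩
  have hfm : AEStronglyMeasurable f μ := by
    have h1 : μ.restrict (Metric.closedBall (0 : ℂ) 1) = μ := by
      refine Measure.restrict_eq_self_of_ae_mem ?_
      rw [Filter.eventually_iff, mem_ae_iff]
      refine measure_mono_null ?_ hμT
      intro x hx
      simp only [Set.mem_compl_iff] at hx ⊢
      exact fun hs => hx (Metric.sphere_subset_closedBall hs)
    rw [← h1]
    exact hfc.aestronglyMeasurable measurableSet_closedBall
  refine squeeze_zero (g := fun n => 4 * (μ Set.univ).toReal *
      (sSup ((fun z => ‖f z - (P n).eval z‖) '' Metric.sphere (0 : ℂ) 1)) ^ 2)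
    (fun n => integral_nonneg fun z => by positivity) ?_ ?_
  · intro n
    have hLcont : Continuous (fun z => lagrangeInterp φ n (ζ n) f z - (P n).eval z) := by
      refine Continuous.sub ?_ (Polynomial.continuous _)
      exact continuous_finset_sum _ fun j _ => continuous_const.mul
        (CD25.cont_ell μ φ hμT hμinf hdeg hlead horth (hwnorm n) (hζnorm n) (hζinj n) (hζ0 n) j)
    have h2int : Integrable
        (fun z => ‖lagrangeInterp φ n (ζ n) f z - (P n).eval z‖ ^ 2) μ :=
      CD25.integ μ hμT ((continuous_norm.comp hLcont).pow 2)
    have hsm : AEStronglyMeasurable (fun z => f z - (P n).eval z) μ :=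
      hfm.sub (Polynomial.continuous _).aestronglyMeasurable
    have h1sm : AEStronglyMeasurable (fun z => ‖f z - (P n).eval z‖ ^ 2) μ := by
      have heq : (fun z => ‖f z - (P n).eval z‖ ^ 2)
          = fun z => ‖f z - (P n).eval z‖ * ‖f z - (P n).eval z‖ := by
        ext z; rw [sq]
      rw [heq]
      exact hsm.norm.mul hsm.norm
    have h1int : Integrable (fun z => ‖f z - (P n).eval z‖ ^ 2) μ := by
      refine (integrable_const
        ((sSup ((fun z => ‖f z - (P n).eval z‖) '' Metric.sphere (0 : ℂ) 1)) ^ 2)).mono'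
        h1sm ?_
      filter_upwards [CD25.ae_sphere μ hμT] with z hz
      have hzs : z ∈ Metric.sphere (0 : ℂ) 1 := by
        simp [Metric.mem_sphere, dist_zero_right, hz]
      rw [Real.norm_eq_abs, abs_of_nonneg (by positivity)]
      exact pow_le_pow_left₀ (norm_nonneg _) (hmem n z hzs) 2
    have hptwise : ∀ z : ℂ, ‖f z - lagrangeInterp φ n (ζ n) f z‖ ^ 2
        ≤ 2 * ‖f z - (P n).eval z‖ ^ 2
          + 2 * ‖lagrangeInterp φ n (ζ n) f z - (P n).eval z‖ ^ 2 := by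
      intro z
      have ht : ‖f z - lagrangeInterp φ n (ζ n) f z‖
          ≤ ‖f z - (P n).eval z‖
            + ‖lagrangeInterp φ n (ζ n) f z - (P n).eval z‖ := by
        have heq : f z - lagrangeInterp φ n (ζ n) f z
            = (f z - (P n).eval z) - (lagrangeInterp φ n (ζ n) f z - (P n).eval z) := by ring
        rw [heq]
        exact norm_sub_le _ _
      nlinarith [norm_nonneg (f z - (P n).eval z),
        norm_nonneg (lagrangeInterp φ n (ζ n) f z - (P n).eval z),
        norm_nonneg (f z - lagrangeInterp φ n (ζ n) f z),
        sq_nonneg (‖f z - (P n).eval z‖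
          - ‖lagrangeInterp φ n (ζ n) f z - (P n).eval z‖)]
    have hPint : Integrable (fun z => 2 * ‖f z - (P n).eval z‖ ^ 2
        + 2 * ‖lagrangeInterp φ n (ζ n) f z - (P n).eval z‖ ^ 2) μ :=
      (h1int.const_mul 2).add (h2int.const_mul 2)
    have step1 : (∫ z, ‖f z - lagrangeInterp φ n (ζ n) f z‖ ^ 2 ∂μ)
        ≤ ∫ z, (2 * ‖f z - (P n).eval z‖ ^ 2
            + 2 * ‖lagrangeInterp φ n (ζ n) f z - (P n).eval z‖ ^ 2) ∂μ :=
      integral_mono_of_nonneg (Filter.Eventually.of_forall fun z => by positivity) hPint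
        (Filter.Eventually.of_forall hptwise)
    have step2 : (∫ z, (2 * ‖f z - (P n).eval z‖ ^ 2
          + 2 * ‖lagrangeInterp φ n (ζ n) f z - (P n).eval z‖ ^ 2) ∂μ)
        = 2 * (∫ z, ‖f z - (P n).eval z‖ ^ 2 ∂μ)
          + 2 * (∫ z, ‖lagrangeInterp φ n (ζ n) f z - (P n).eval z‖ ^ 2 ∂μ) := by
      rw [integral_add (h1int.const_mul 2) (h2int.const_mul 2), integral_const_mul,
        integral_const_mul]
    have step3 : (∫ z, ‖f z - (P n).eval z‖ ^ 2 ∂μ)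
        ≤ (μ Set.univ).toReal *
          (sSup ((fun z => ‖f z - (P n).eval z‖) '' Metric.sphere (0 : ℂ) 1)) ^ 2 := by
      have hm : (∫ z, ‖f z - (P n).eval z‖ ^ 2 ∂μ)
          ≤ ∫ _z, (sSup ((fun z => ‖f z - (P n).eval z‖)
              '' Metric.sphere (0 : ℂ) 1)) ^ 2 ∂μ := by
        refine integral_mono_ae h1int (integrable_const _) ?_
        filter_upwards [CD25.ae_sphere μ hμT] with z hz
        have hzs : z ∈ Metric.sphere (0 : ℂ) 1 := by
          simp [Metric.mem_sphere, dist_zero_right, hz]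
        exact pow_le_pow_left₀ (norm_nonneg _) (hmem n z hzs) 2
      rwa [integral_const, smul_eq_mul] at hm
    have := hpart1 n
    show (∫ z, ‖f z - lagrangeInterp φ n (ζ n) f z‖ ^ 2 ∂μ)
        ≤ 4 * (μ Set.univ).toReal *
          (sSup ((fun z => ‖f z - (P n).eval z‖) '' Metric.sphere (0 : ℂ) 1)) ^ 2
    linarith
  · have h0 : Tendsto (fun n => (sSup ((fun z => ‖f z - (P n).eval z‖)
        '' Metric.sphere (0 : ℂ) 1)) ^ 2) atTop (𝓝 0) := by
      have := hPf.pow 2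
      simpa using this
    have := h0.const_mul (4 * (μ Set.univ).toReal)
    simpa [mul_comm] using this
end

section
/- Let μ be a finite positive Borel measure on the unit circle T with infinite support, w ∈ T, ζ_{0n}, …, ζ_{nn} ∈ T the zeros of the para-orthogonal polynomial B_{n+1}(w,·), K_n the Christoffel kernel, and L_n the Lagrange interpolation operator at these zeros. For every continuous f : T → ℂ and every g ∈ L²(μ), |∫_T L_n(f) conj(g) dμ| ≤ μ(T)^{1/2} · (max_{z∈T} |f(z)|) · (∫_T |S_n(g)|² dμ)^{1/2}, where S_n(g) = Σ_{k=0}^n ⟨g, φ_k⟩ φ_k is the n-th partial sum of the Fourier expansion of g in the orthonormal polynomials {φ_k}. -/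
open MeasureTheory Polynomial Filter
open scoped ComplexConjugate Topology

set_option linter.unusedSectionVars false
set_option linter.unusedVariables false
set_option maxHeartbeats 1000000

namespace OPAux


/-- reversed-conjugated polynomial relative to degree `N`. -/
noncomputable def pstar (N : ℕ) (p : Polynomial ℂ) : Polynomial ℂ :=
  ∑ j ∈ Finset.range (N + 1), Polynomial.C (conj (p.coeff (N - j))) * Polynomial.X ^ j

lemma pstar_coeff (N : ℕ) (p : Polynomial ℂ) (j : ℕ) :
    (pstar N p).coeff j = if j ≤ N then conj (p.coeff (N - j)) else 0 := by
  rw [pstar, Polynomial.finset_sum_coeff]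
  simp only [Polynomial.coeff_C_mul, Polynomial.coeff_X_pow]
  simp only [mul_ite, mul_one, mul_zero]
  rw [Finset.sum_ite_eq (Finset.range (N+1)) j (fun i => conj (p.coeff (N - i)))]
  simp [Finset.mem_range, Nat.lt_succ_iff]

lemma pstar_natDegree_le (N : ℕ) (p : Polynomial ℂ) : (pstar N p).natDegree ≤ N := by
  apply Polynomial.natDegree_le_iff_coeff_eq_zero.2
  intro m hm
  rw [pstar_coeff]
  simp [Nat.not_le.2 hm]

lemma pstar_degree_lt (N : ℕ) (p : Polynomial ℂ) : (pstar N p).degree < ((N+1 : ℕ) : WithBot ℕ) := by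
  apply lt_of_le_of_lt (Polynomial.degree_le_natDegree)
  exact_mod_cast Nat.lt_succ_of_le (pstar_natDegree_le N p)

lemma pstar_add (N : ℕ) (p q : Polynomial ℂ) :
    pstar N (p + q) = pstar N p + pstar N q := by
  ext m
  simp only [pstar_coeff, Polynomial.coeff_add, map_add]
  split <;> simp

lemma pstar_C_mul (N : ℕ) (c : ℂ) (p : Polynomial ℂ) :
    pstar N (Polynomial.C c * p) = Polynomial.C (conj c) * pstar N p := by
  ext m
  simp only [pstar_coeff, Polynomial.coeff_C_mul, map_mul]
  split <;> simp

lemma pstar_X_mul (N : ℕ) (p : Polynomial ℂ) :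
    pstar (N + 1) (Polynomial.X * p) = pstar N p := by
  ext m
  simp only [pstar_coeff]
  rcases le_or_gt m N with hm | hm
  · rw [if_pos hm, if_pos (le_trans hm (Nat.le_succ N))]
    have : N + 1 - m = (N - m) + 1 := by omega
    rw [this, Polynomial.coeff_X_mul]
  · rw [if_neg (Nat.not_le.2 hm)]
    rcases eq_or_lt_of_le (Nat.succ_le_of_lt hm) with hm' | hm'
    · rw [if_pos (le_of_eq hm'.symm)]
      have : N + 1 - m = 0 := by omega
      rw [this]
      have : (Polynomial.X * p).coeff 0 = 0 := by
        rw [Polynomial.mul_coeff_zero, Polynomial.coeff_X_zero, zero_mul]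
      simp [this]
    · rw [if_neg (by omega)]

lemma pstar_pstar (N : ℕ) (p : Polynomial ℂ) (hp : p.natDegree ≤ N) :
    pstar (N + 1) (pstar N p) = Polynomial.X * p := by
  ext m
  rw [pstar_coeff]
  rcases Nat.eq_zero_or_pos m with rfl | hm
  · rw [if_pos (Nat.zero_le _)]
    have : (pstar N p).coeff (N + 1 - 0) = 0 := by
      rw [pstar_coeff]; simp
    rw [this, map_zero]
    rw [Polynomial.mul_coeff_zero, Polynomial.coeff_X_zero, zero_mul]
  · obtain ⟨m', rfl⟩ : ∃ m', m = m' + 1 := ⟨m - 1, by omega⟩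
    rw [Polynomial.coeff_X_mul]
    rcases le_or_gt (m' + 1) (N + 1) with hm1 | hm1
    · rw [if_pos hm1]
      have h2 : N + 1 - (m' + 1) = N - m' := by omega
      rw [h2, pstar_coeff, if_pos (by omega), Complex.conj_conj]
      congr 1
      omega
    · rw [if_neg (by omega)]
      exact (Polynomial.coeff_eq_zero_of_natDegree_lt (by omega)).symm



lemma pstar_eval (N : ℕ) (p : Polynomial ℂ) (z : ℂ) :
    (pstar N p).eval z = ∑ j ∈ Finset.range (N + 1), conj (p.coeff (N - j)) * z ^ j := by
  simp [pstar, Polynomial.eval_finset_sum]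

/-- On the unit circle, `z^N * conj((pstar N p)(z)) = p(z)` for `deg p ≤ N`. -/
lemma pstar_eval_circle (N : ℕ) (p : Polynomial ℂ) (hp : p.natDegree ≤ N) (z : ℂ)
    (hz : z * conj z = 1) :
    z ^ N * conj ((pstar N p).eval z) = p.eval z := by
  rw [pstar_eval, map_sum, Finset.mul_sum]
  have key : ∀ j ∈ Finset.range (N + 1),
      z ^ N * conj (conj (p.coeff (N - j)) * z ^ j) = p.coeff (N - j) * z ^ (N - j) := by
    intro j hj
    rw [Finset.mem_range, Nat.lt_succ_iff] at hj
    rw [map_mul, Complex.conj_conj, map_pow]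
    set c := p.coeff (N - j) with hc
    set m := N - j with hmdef
    have hNj : N = m + j := by omega
    rw [hNj]
    calc z ^ (m + j) * (c * conj z ^ j)
        = c * z ^ m * ((z * conj z) ^ j) := by rw [pow_add, mul_pow]; ring
      _ = c * z ^ m := by rw [hz, one_pow, mul_one]
  rw [Finset.sum_congr rfl key]
  have hrefl := Finset.sum_range_reflect (fun i => p.coeff i * z ^ i) (N + 1)
  simp only [Nat.add_sub_cancel] at hrefl
  rw [hrefl, ← Polynomial.eval_eq_sum_range' (Nat.lt_succ_of_le hp)]

/-- On the unit circle, `|pstar N p (z)| = |p(z)|` for `deg p ≤ N`. -/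
lemma pstar_abs_circle (N : ℕ) (p : Polynomial ℂ) (hp : p.natDegree ≤ N) (z : ℂ)
    (hz : z * conj z = 1) :
    ‖(pstar N p).eval z‖ = ‖p.eval z‖ := by
  have habs : ‖z‖ = 1 := by
    have := congrArg (norm : ℂ → ℝ) hz
    rw [norm_mul, Complex.norm_conj, norm_one, ← sq] at this
    nlinarith [norm_nonneg z]
  have := congrArg (norm : ℂ → ℝ) (pstar_eval_circle N p hp z hz)
  rwa [norm_mul, norm_pow, habs, one_pow, one_mul, Complex.norm_conj] at this

lemma pstar_C (c : ℂ) : pstar 0 (Polynomial.C c) = Polynomial.C (conj c) := by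
  simp [pstar]



section Inner
variable (μ : Measure ℂ) [IsFiniteMeasure μ]

/-- a.e. every point is on the unit circle. -/
lemma ae_circle (hμT : μ (Metric.sphere (0 : ℂ) 1)ᶜ = 0) :
    ∀ᵐ z ∂μ, z * conj z = 1 := by
  rw [ae_iff]
  refine measure_mono_null ?_ hμT
  intro z hz
  simp only [Set.mem_setOf_eq] at hz
  simp only [Set.mem_compl_iff, Metric.mem_sphere, not_not]
  intro hmem
  apply hz
  have : ‖z‖ = 1 := by
    rwa [Complex.dist_eq, sub_zero] at hmem
  rw [Complex.mul_conj, Complex.normSq_eq_norm_sq, this]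
  norm_num

/-- Any globally continuous function is integrable against μ. -/
lemma integrable_of_cont (hμT : μ (Metric.sphere (0 : ℂ) 1)ᶜ = 0)
    {E : Type*} [NormedAddCommGroup E] (h : ℂ → E) (hc : Continuous h) :
    Integrable h μ := by
  obtain ⟨C, hC⟩ := (isCompact_sphere (0:ℂ) 1).exists_bound_of_continuousOn hc.continuousOn
  refine Integrable.mono' (integrable_const C) hc.aestronglyMeasurable ?_
  have : ∀ᵐ z ∂μ, z ∈ Metric.sphere (0:ℂ) 1 := by
    rw [ae_iff]
    refine measure_mono_null ?_ hμT
    intro z hz; exact hz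
  filter_upwards [this] with z hz using hC z hz

/-- the inner product of two polynomials. -/
noncomputable def inn (p q : Polynomial ℂ) : ℂ := ∫ z, p.eval z * conj (q.eval z) ∂μ

lemma integrable_eval_mul_conj (hμT : μ (Metric.sphere (0 : ℂ) 1)ᶜ = 0) (p q : Polynomial ℂ) :
    Integrable (fun z => p.eval z * conj (q.eval z)) μ := by
  apply integrable_of_cont μ hμT
  exact (p.continuous_aeval).mul (Complex.continuous_conj.comp q.continuous_aeval)

lemma inn_conj_symm (p q : Polynomial ℂ) : inn μ p q = conj (inn μ q p) := by
  rw [inn, inn, ← integral_conj]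
  congr 1; funext z
  rw [map_mul, Complex.conj_conj, mul_comm]

lemma inn_add_left (hμT : μ (Metric.sphere (0 : ℂ) 1)ᶜ = 0) (p q r : Polynomial ℂ) :
    inn μ (p + q) r = inn μ p r + inn μ q r := by
  rw [inn, inn, inn, ← integral_add (integrable_eval_mul_conj μ hμT p r)
    (integrable_eval_mul_conj μ hμT q r)]
  congr 1; funext z; rw [Polynomial.eval_add, add_mul]

lemma inn_C_mul_left (c : ℂ) (p q : Polynomial ℂ) :
    inn μ (Polynomial.C c * p) q = c * inn μ p q := by
  rw [inn, inn, ← integral_const_mul]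
  congr 1; funext z
  rw [Polynomial.eval_mul, Polynomial.eval_C]; ring

lemma inn_C_mul_right (hμT : μ (Metric.sphere (0 : ℂ) 1)ᶜ = 0) (c : ℂ) (p q : Polynomial ℂ) :
    inn μ p (Polynomial.C c * q) = conj c * inn μ p q := by
  rw [inn_conj_symm μ, inn_C_mul_left μ, map_mul, ← inn_conj_symm μ]

lemma inn_sub_left (hμT : μ (Metric.sphere (0 : ℂ) 1)ᶜ = 0) (p q r : Polynomial ℂ) :
    inn μ (p - q) r = inn μ p r - inn μ q r := by
  rw [inn, inn, inn, ← integral_sub (integrable_eval_mul_conj μ hμT p r)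
    (integrable_eval_mul_conj μ hμT q r)]
  congr 1; funext z; rw [Polynomial.eval_sub, sub_mul]

lemma inn_sub_right (hμT : μ (Metric.sphere (0 : ℂ) 1)ᶜ = 0) (p q r : Polynomial ℂ) :
    inn μ p (q - r) = inn μ p q - inn μ p r := by
  rw [inn_conj_symm μ, inn_sub_left μ hμT, map_sub, ← inn_conj_symm μ, ← inn_conj_symm μ]

lemma inn_sum_left (hμT : μ (Metric.sphere (0 : ℂ) 1)ᶜ = 0) {ι : Type*} (s : Finset ι) (f : ι → Polynomial ℂ) (q : Polynomial ℂ) :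
    inn μ (∑ i ∈ s, f i) q = ∑ i ∈ s, inn μ (f i) q := by
  simp only [inn]
  rw [← integral_finset_sum s (fun i _ => integrable_eval_mul_conj μ hμT (f i) q)]
  congr 1; funext z
  rw [Polynomial.eval_finset_sum, Finset.sum_mul]

lemma inn_sum_right (hμT : μ (Metric.sphere (0 : ℂ) 1)ᶜ = 0) {ι : Type*} (s : Finset ι) (f : ι → Polynomial ℂ) (q : Polynomial ℂ) :
    inn μ q (∑ i ∈ s, f i) = ∑ i ∈ s, conj (inn μ (f i) q) := by
  rw [inn_conj_symm μ, inn_sum_left μ hμT, map_sum]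

lemma inn_self (p : Polynomial ℂ) :
    inn μ p p = ((∫ z, ‖p.eval z‖ ^ 2 ∂μ : ℝ) : ℂ) := by
  have h : ∫ z, ((‖p.eval z‖ ^ 2 : ℝ) : ℂ) ∂μ
      = ((∫ z, ‖p.eval z‖ ^ 2 ∂μ : ℝ) : ℂ) := integral_ofReal
  rw [inn, ← h]
  congr 1; funext z
  rw [Complex.mul_conj, Complex.sq_norm]

lemma integrable_abs_sq (hμT : μ (Metric.sphere (0 : ℂ) 1)ᶜ = 0) (p : Polynomial ℂ) :
    Integrable (fun z => ‖p.eval z‖ ^ 2) μ := by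
  apply integrable_of_cont μ hμT
  exact (continuous_norm.comp p.continuous_aeval).pow 2

lemma inn_self_nonneg (p : Polynomial ℂ) : 0 ≤ ∫ z, ‖p.eval z‖ ^ 2 ∂μ :=
  integral_nonneg (fun _ => sq_nonneg _)

/-- positive definiteness from infinite support. -/
lemma eq_zero_of_inn_self (hμT : μ (Metric.sphere (0 : ℂ) 1)ᶜ = 0) (hμinf : ∀ s : Finset ℂ, μ ((s : Set ℂ)ᶜ) ≠ 0)
    (p : Polynomial ℂ) (h : inn μ p p = 0) : p = 0 := by
  rw [inn_self μ] at h
  have h0 : ∫ z, ‖p.eval z‖ ^ 2 ∂μ = 0 := by exact_mod_cast h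
  have hae : (fun z => ‖p.eval z‖ ^ 2) =ᵐ[μ] 0 :=
    (integral_eq_zero_iff_of_nonneg (fun z => sq_nonneg _) (integrable_abs_sq μ hμT p)).1 h0
  by_contra hp
  have : μ ((p.roots.toFinset : Set ℂ)ᶜ) = 0 := by
    refine measure_mono_null ?_ (ae_iff.1 hae)
    intro z hz
    simp only [Set.mem_compl_iff, Finset.mem_coe, Multiset.mem_toFinset] at hz
    simp only [Set.mem_setOf_eq, Pi.zero_apply]
    intro hcon
    apply hz
    refine Polynomial.mem_roots'.2 ⟨hp, ?_⟩
    have : ‖p.eval z‖ = 0 := by nlinarith [norm_nonneg (p.eval z)]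
    simpa [Polynomial.IsRoot] using this
  exact hμinf _ this

/-- isometry of multiplication by X (needs the circle). -/
lemma inn_X_mul (hμT : μ (Metric.sphere (0 : ℂ) 1)ᶜ = 0) (p q : Polynomial ℂ) :
    inn μ (Polynomial.X * p) (Polynomial.X * q) = inn μ p q := by
  rw [inn, inn]
  apply integral_congr_ae
  filter_upwards [ae_circle μ hμT] with z hz
  simp only [Polynomial.eval_mul, Polynomial.eval_X, map_mul]
  calc z * p.eval z * (conj z * conj (q.eval z))
      = (z * conj z) * (p.eval z * conj (q.eval z)) := by ring
    _ = p.eval z * conj (q.eval z) := by rw [hz, one_mul]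

end Inner

end OPAux

namespace OPAux
section Span
variable (μ : Measure ℂ) [IsFiniteMeasure μ]
variable (φ : ℕ → Polynomial ℂ)

lemma phi_natDegree (hdeg : ∀ k, (φ k).degree = (k : ℕ)) (k : ℕ) : (φ k).natDegree = k :=
  Polynomial.natDegree_eq_of_degree_eq_some (hdeg k)

lemma phi_lead_ne (hdeg : ∀ k, (φ k).degree = (k : ℕ)) (k : ℕ) : (φ k).leadingCoeff ≠ 0 := by
  apply Polynomial.leadingCoeff_ne_zero.2
  intro h
  have h2 := hdeg k
  rw [h, Polynomial.degree_zero] at h2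
  exact absurd h2.symm (by simp)

lemma phi_coeff_self (hdeg : ∀ k, (φ k).degree = (k : ℕ)) (k : ℕ) :
    (φ k).coeff k = (φ k).leadingCoeff := by
  rw [Polynomial.leadingCoeff, phi_natDegree φ hdeg k]

/-- Every polynomial of degree < d is a combination of `φ 0, …, φ (d-1)`. -/
lemma mem_span (hdeg : ∀ k, (φ k).degree = (k : ℕ)) :
    ∀ (d : ℕ) (p : Polynomial ℂ), p.degree < (d : ℕ) →
      p ∈ Submodule.span ℂ (φ '' Set.Iio d) := by
  intro d
  induction d with
  | zero =>
    intro p hp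
    have : p = 0 := by
      rw [← Polynomial.degree_eq_bot]
      exact Nat.WithBot.lt_zero_iff.mp (by exact_mod_cast hp)
    simp [this]
  | succ d ih =>
    intro p hp
    rcases lt_or_ge p.degree (d : ℕ) with hp' | hp'
    · exact Submodule.span_mono
        (Set.image_mono (fun x hx => lt_trans hx (Nat.lt_succ_self d))) (ih p hp')
    · set κ := (φ d).leadingCoeff with hκ
      have hκ0 : κ ≠ 0 := phi_lead_ne φ hdeg d
      set a := p.coeff d with ha
      set q := p - Polynomial.C (a * κ⁻¹) * φ d with hq
      have hqdeg : q.degree < (d : ℕ) := by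
        rw [Polynomial.degree_lt_iff_coeff_zero]
        intro m hm
        rw [hq, Polynomial.coeff_sub, Polynomial.coeff_C_mul]
        rcases eq_or_lt_of_le hm with hm' | hm'
        · rw [← hm', ← ha, phi_coeff_self φ hdeg d, ← hκ,
            mul_assoc, inv_mul_cancel₀ hκ0, mul_one, sub_self]
        · have h1 : p.coeff m = 0 := by
            apply Polynomial.coeff_eq_zero_of_degree_lt
            exact lt_of_lt_of_le hp (by exact_mod_cast hm')
          have h2 : (φ d).coeff m = 0 := by
            apply Polynomial.coeff_eq_zero_of_degree_lt
            rw [hdeg d]; exact_mod_cast hm'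
          rw [h1, h2, mul_zero, sub_self]
      have hqmem := Submodule.span_mono
        (Set.image_mono (fun x hx => lt_trans hx (Nat.lt_succ_self d))) (ih q hqdeg)
      have hφmem : φ d ∈ Submodule.span ℂ (φ '' Set.Iio (d+1)) :=
        Submodule.subset_span ⟨d, Nat.lt_succ_self d, rfl⟩
      have : p = q + (a * κ⁻¹) • φ d := by
        rw [hq, Polynomial.smul_eq_C_mul]; ring
      rw [this]
      exact Submodule.add_mem _ hqmem (Submodule.smul_mem _ _ hφmem)

lemma inn_phi_phi (horth : ∀ k m, ∫ z, (φ k).eval z * conj ((φ m).eval z) ∂μ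
    = if k = m then 1 else 0) (k m : ℕ) :
    inn μ (φ k) (φ m) = if k = m then 1 else 0 := horth k m

/-- Monomial orthogonality: anything of degree < k is `inn`-orthogonal to `φ k`. -/
lemma inn_low (hμT : μ (Metric.sphere (0 : ℂ) 1)ᶜ = 0)
    (horth : ∀ k m, ∫ z, (φ k).eval z * conj ((φ m).eval z) ∂μ = if k = m then 1 else 0)
    (hdeg : ∀ k, (φ k).degree = (k : ℕ)) (k : ℕ) (p : Polynomial ℂ)
    (hp : p.degree < (k : ℕ)) : inn μ p (φ k) = 0 := by
  have hsp := mem_span φ hdeg k p hp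
  clear hp
  induction hsp using Submodule.span_induction with
  | mem x hx =>
    obtain ⟨i, hi, rfl⟩ := hx
    rw [inn_phi_phi μ φ horth i k, if_neg (Nat.ne_of_lt hi)]
  | zero => simp [inn]
  | add x y hx hy ihx ihy => rw [inn_add_left μ hμT, ihx, ihy, add_zero]
  | smul c x hx ihx => rw [Polynomial.smul_eq_C_mul, inn_C_mul_left μ, ihx, mul_zero]

lemma inn_low' (hμT : μ (Metric.sphere (0 : ℂ) 1)ᶜ = 0)
    (horth : ∀ k m, ∫ z, (φ k).eval z * conj ((φ m).eval z) ∂μ = if k = m then 1 else 0)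
    (hdeg : ∀ k, (φ k).degree = (k : ℕ)) (k : ℕ) (p : Polynomial ℂ)
    (hp : p.degree < (k : ℕ)) : inn μ (φ k) p = 0 := by
  rw [inn_conj_symm μ, inn_low μ φ hμT horth hdeg k p hp, map_zero]

/-- `κ_k ☬ ⟨X^k, φ_k⟩ = 1`. -/
lemma kappa_inn (hμT : μ (Metric.sphere (0 : ℂ) 1)ᶜ = 0)
    (horth : ∀ k m, ∫ z, (φ k).eval z * conj ((φ m).eval z) ∂μ = if k = m then 1 else 0)
    (hdeg : ∀ k, (φ k).degree = (k : ℕ)) (k : ℕ) :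
    (φ k).leadingCoeff * inn μ (Polynomial.X ^ k) (φ k) = 1 := by
  set κ := (φ k).leadingCoeff with hκ
  set r := φ k - Polynomial.C κ * Polynomial.X ^ k with hr
  have hrdeg : r.degree < (k : ℕ) := by
    rw [Polynomial.degree_lt_iff_coeff_zero]
    intro m hm
    rw [hr, Polynomial.coeff_sub, Polynomial.coeff_C_mul, Polynomial.coeff_X_pow]
    rcases eq_or_lt_of_le hm with hm' | hm'
    · rw [if_pos hm'.symm, mul_one, ← hm', phi_coeff_self φ hdeg, sub_self]
    · rw [if_neg (by omega), mul_zero, Polynomial.coeff_eq_zero_of_degree_lt, sub_zero]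
      rw [hdeg k]; exact_mod_cast hm'
  have h1 : inn μ (φ k) (φ k) = 1 := by rw [inn_phi_phi μ φ horth, if_pos rfl]
  have h2 : φ k = r + Polynomial.C κ * Polynomial.X ^ k := by rw [hr]; ring
  nth_rewrite 1 [h2] at h1
  rw [inn_add_left μ hμT, inn_C_mul_left μ,
    inn_low μ φ hμT horth hdeg k r hrdeg, zero_add] at h1
  exact h1

lemma inn_Xpow_phi_ne (hμT : μ (Metric.sphere (0 : ℂ) 1)ᶜ = 0)
    (horth : ∀ k m, ∫ z, (φ k).eval z * conj ((φ m).eval z) ∂μ = if k = m then 1 else 0)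
    (hdeg : ∀ k, (φ k).degree = (k : ℕ)) (k : ℕ) :
    inn μ (Polynomial.X ^ k) (φ k) ≠ 0 := by
  intro h
  have := kappa_inn μ φ hμT horth hdeg k
  rw [h, mul_zero] at this
  exact zero_ne_one this

end Span
end OPAux

namespace OPAux
section Szego
variable (μ : Measure ℂ) [IsFiniteMeasure μ]
variable (φ : ℕ → Polynomial ℂ)

lemma pstar_sub (N : ℕ) (p q : Polynomial ℂ) :
    pstar N (p - q) = pstar N p - pstar N q := by
  ext m
  simp only [pstar_coeff, Polynomial.coeff_sub, map_sub]
  split <;> simp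

lemma inn_add_right (hμT : μ (Metric.sphere (0 : ℂ) 1)ᶜ = 0) (p q r : Polynomial ℂ) :
    inn μ p (q + r) = inn μ p q + inn μ p r := by
  rw [inn_conj_symm μ, inn_add_left μ hμT, map_add, ← inn_conj_symm μ, ← inn_conj_symm μ]

lemma inn_pstar_self (hμT : μ (Metric.sphere (0 : ℂ) 1)ᶜ = 0) (N : ℕ) (p : Polynomial ℂ)
    (hp : p.natDegree ≤ N) : inn μ (pstar N p) (pstar N p) = inn μ p p := by
  rw [inn, inn]
  apply integral_congr_ae
  filter_upwards [ae_circle μ hμT] with z hz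
  rw [Complex.mul_conj, Complex.mul_conj, ← Complex.sq_norm, ← Complex.sq_norm,
    pstar_abs_circle N p hp z hz]

lemma inn_Xpow_pstar (hμT : μ (Metric.sphere (0 : ℂ) 1)ᶜ = 0) (N m : ℕ) (p : Polynomial ℂ)
    (hp : p.natDegree ≤ N) (hm : m ≤ N) :
    inn μ (Polynomial.X ^ m) (pstar N p) = inn μ p (Polynomial.X ^ (N - m)) := by
  rw [inn, inn]
  apply integral_congr_ae
  filter_upwards [ae_circle μ hμT] with z hz
  have hz0 : z ≠ 0 := by
    intro h; rw [h, zero_mul] at hz; exact zero_ne_one hz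
  have hkey := pstar_eval_circle N p hp z hz
  simp only [Polynomial.eval_pow, Polynomial.eval_X]
  apply mul_left_cancel₀ (pow_ne_zero (N - m) hz0)
  calc z ^ (N - m) * (z ^ m * conj ((pstar N p).eval z))
      = z ^ N * conj ((pstar N p).eval z) := by
        rw [← mul_assoc, ← pow_add]; congr 2; omega
    _ = p.eval z := hkey
    _ = z ^ (N - m) * (p.eval z * conj (z ^ (N - m))) := by
        rw [map_pow]
        calc p.eval z = p.eval z * ((z * conj z) ^ (N - m)) := by rw [hz, one_pow, mul_one]
          _ = z ^ (N - m) * (p.eval z * conj z ^ (N - m)) := by rw [mul_pow]; ring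

lemma inn_Xpow_pstar_top (hμT : μ (Metric.sphere (0 : ℂ) 1)ᶜ = 0) (N : ℕ) (p : Polynomial ℂ)
    (hp : p.natDegree ≤ N) :
    inn μ (Polynomial.X ^ (N + 1)) (pstar N p) = inn μ (Polynomial.X * p) 1 := by
  rw [inn, inn]
  apply integral_congr_ae
  filter_upwards [ae_circle μ hμT] with z hz
  have hkey := pstar_eval_circle N p hp z hz
  simp only [Polynomial.eval_pow, Polynomial.eval_X, Polynomial.eval_mul, Polynomial.eval_one,
    map_one, mul_one]
  calc z ^ (N + 1) * conj ((pstar N p).eval z)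
      = z * (z ^ N * conj ((pstar N p).eval z)) := by rw [pow_succ]; ring
    _ = z * p.eval z := by rw [hkey]

/-- The Szegő recursion pair, derived from orthogonality. -/
lemma szego (hμT : μ (Metric.sphere (0 : ℂ) 1)ᶜ = 0)
    (hμinf : ∀ s : Finset ℂ, μ ((s : Set ℂ)ᶜ) ≠ 0)
    (hdeg : ∀ k, (φ k).degree = (k : ℕ))
    (horth : ∀ k m, ∫ z, (φ k).eval z * conj ((φ m).eval z) ∂μ = if k = m then 1 else 0)
    (k : ℕ) :
    ∃ ρ β : ℂ, ρ ≠ 0 ∧ ρ * conj ρ + β * conj β = 1 ∧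
      Polynomial.C ρ * φ (k+1) = Polynomial.X * φ k - Polynomial.C β * pstar k (φ k) ∧
      Polynomial.C (conj ρ) * pstar (k+1) (φ (k+1))
        = pstar k (φ k) - Polynomial.C (conj β) * (Polynomial.X * φ k) := by
  have hnd : ∀ j, (φ j).natDegree = j := phi_natDegree φ hdeg
  set τ := inn μ (Polynomial.X ^ k) (φ k) with hτ
  have hτ0 : τ ≠ 0 := inn_Xpow_phi_ne μ φ hμT horth hdeg k
  set τ1 := inn μ (Polynomial.X ^ (k+1)) (φ (k+1)) with hτ1
  have hτ10 : τ1 ≠ 0 := inn_Xpow_phi_ne μ φ hμT horth hdeg (k+1)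
  set σ := inn μ (Polynomial.X * φ k) 1 with hσ
  set β := σ * τ⁻¹ with hβ
  set ρ := conj ((τ - conj β * σ) * τ1⁻¹) with hρdef
  set D := Polynomial.X * φ k - Polynomial.C ρ * φ (k+1) - Polynomial.C β * pstar k (φ k)
    with hD
  have hm : ∀ m, m ≤ k + 1 → inn μ (Polynomial.X ^ m) D = 0 := by
    intro m hmle
    rw [hD, inn_sub_right μ hμT, inn_sub_right μ hμT, inn_C_mul_right μ hμT, inn_C_mul_right μ hμT]
    rcases Nat.eq_zero_or_pos m with rfl | hmpos
    · have e1 : inn μ (Polynomial.X ^ 0) (Polynomial.X * φ k) = conj σ := by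
        rw [pow_zero, hσ, inn_conj_symm μ]
      have e2 : inn μ (Polynomial.X ^ 0) (φ (k+1)) = 0 := by
        apply inn_low μ φ hμT horth hdeg
        rw [pow_zero, Polynomial.degree_one]
        exact_mod_cast Nat.succ_pos k
      have e3 : inn μ (Polynomial.X ^ 0) (pstar k (φ k)) = conj τ := by
        rw [inn_Xpow_pstar μ hμT k 0 (φ k) (le_of_eq (hnd k)) (Nat.zero_le k),
          Nat.sub_zero, hτ, inn_conj_symm μ]
      rw [e1, e2, e3, mul_zero, sub_zero]
      have hbt : conj β * conj τ = conj σ := by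
        rw [← map_mul]
        congr 1
        rw [hβ]
        field_simp
      rw [hbt, sub_self]
    · rcases eq_or_lt_of_le hmle with hmeq | hmlt
      · -- m = k+1
        subst hmeq
        have e1 : inn μ (Polynomial.X ^ (k+1)) (Polynomial.X * φ k) = τ := by
          rw [pow_succ, mul_comm (Polynomial.X ^ k) Polynomial.X, inn_X_mul μ hμT, hτ]
        have e3 : inn μ (Polynomial.X ^ (k+1)) (pstar k (φ k)) = σ :=
          inn_Xpow_pstar_top μ hμT k (φ k) (le_of_eq (hnd k))
        rw [e1, e3, ← hτ1]
        rw [hρdef, Complex.conj_conj]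
        field_simp
        ring
      · -- 1 ≤ m ≤ k
        have hmk : m ≤ k := by omega
        obtain ⟨m', rfl⟩ : ∃ m', m = m' + 1 := ⟨m - 1, by omega⟩
        have e1 : inn μ (Polynomial.X ^ (m'+1)) (Polynomial.X * φ k) = 0 := by
          rw [pow_succ, mul_comm (Polynomial.X ^ m') Polynomial.X, inn_X_mul μ hμT]
          apply inn_low μ φ hμT horth hdeg
          rw [Polynomial.degree_X_pow]
          exact_mod_cast (by omega : m' < k)
        have e2 : inn μ (Polynomial.X ^ (m'+1)) (φ (k+1)) = 0 := by
          apply inn_low μ φ hμT horth hdeg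
          rw [Polynomial.degree_X_pow]
          exact_mod_cast (by omega : m' + 1 < k + 1)
        have e3 : inn μ (Polynomial.X ^ (m'+1)) (pstar k (φ k)) = 0 := by
          rw [inn_Xpow_pstar μ hμT k (m'+1) (φ k) (le_of_eq (hnd k)) hmk,
            inn_conj_symm μ]
          rw [inn_low μ φ hμT horth hdeg k _ ?_, map_zero]
          rw [Polynomial.degree_X_pow]
          exact_mod_cast (by omega : k - (m'+1) < k)
        rw [e1, e2, e3, mul_zero, mul_zero, sub_zero, sub_zero]
  have hDdeg : D.natDegree < k + 2 := by
    apply Nat.lt_succ_of_le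
    rw [hD]
    apply le_trans (Polynomial.natDegree_sub_le _ _)
    apply max_le
    · apply le_trans (Polynomial.natDegree_sub_le _ _)
      apply max_le
      · apply le_trans (Polynomial.natDegree_mul_le)
        rw [Polynomial.natDegree_X, hnd k]
        omega
      · apply le_trans (Polynomial.natDegree_mul_le)
        rw [Polynomial.natDegree_C, hnd (k+1)]
        omega
    · apply le_trans (Polynomial.natDegree_mul_le)
      rw [Polynomial.natDegree_C]
      have := pstar_natDegree_le k (φ k)
      omega
  have hDzero : D = 0 := by
    apply eq_zero_of_inn_self μ hμT hμinf
    have hsum := Polynomial.as_sum_range' D (k+2) hDdeg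
    nth_rewrite 2 [hsum]
    rw [inn_sum_right μ hμT]
    apply Finset.sum_eq_zero
    intro i hi
    rw [Finset.mem_range] at hi
    rw [← Polynomial.C_mul_X_pow_eq_monomial, inn_C_mul_left μ, hm i (by omega), mul_zero,
      map_zero]
  have hR1 : Polynomial.C ρ * φ (k+1)
      = Polynomial.X * φ k - Polynomial.C β * pstar k (φ k) := by
    have := sub_eq_zero.mp (by rw [← hD] at *; linear_combination hDzero)
    linear_combination -this
  have hρ0 : ρ ≠ 0 := by
    intro hcon
    have hc := congrArg (fun p => Polynomial.coeff p (k+1)) hR1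
    simp only [Polynomial.coeff_C_mul, Polynomial.coeff_sub, Polynomial.coeff_X_mul] at hc
    rw [pstar_coeff] at hc
    rw [if_neg (by omega)] at hc
    rw [hcon, zero_mul, mul_zero, sub_zero] at hc
    rw [phi_coeff_self φ hdeg k] at hc
    exact phi_lead_ne φ hdeg k hc.symm
  have hR2 : Polynomial.C (conj ρ) * pstar (k+1) (φ (k+1))
      = pstar k (φ k) - Polynomial.C (conj β) * (Polynomial.X * φ k) := by
    have hc := congrArg (pstar (k+1)) hR1
    rw [pstar_C_mul, pstar_sub, pstar_X_mul, pstar_C_mul,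
      pstar_pstar k (φ k) (le_of_eq (hnd k))] at hc
    exact hc
  have hnorm : ρ * conj ρ + β * conj β = 1 := by
    have h1 : inn μ (Polynomial.X * φ k) (Polynomial.X * φ k) = 1 := by
      rw [inn_X_mul μ hμT, inn_phi_phi μ φ horth, if_pos rfl]
    have hXsum : Polynomial.X * φ k
        = Polynomial.C ρ * φ (k+1) + Polynomial.C β * pstar k (φ k) := by
      rw [hR1]; ring
    rw [hXsum, inn_add_left μ hμT, inn_add_right μ hμT, inn_add_right μ hμT] at h1
    have hps_deg : (pstar k (φ k)).degree < ((k+1 : ℕ) : WithBot ℕ) := pstar_degree_lt k (φ k)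
    have t1 : inn μ (Polynomial.C ρ * φ (k+1)) (Polynomial.C ρ * φ (k+1)) = ρ * conj ρ := by
      rw [inn_C_mul_left μ, inn_C_mul_right μ hμT, inn_phi_phi μ φ horth, if_pos rfl]
      ring
    have t2 : inn μ (Polynomial.C ρ * φ (k+1)) (Polynomial.C β * pstar k (φ k)) = 0 := by
      rw [inn_C_mul_left μ, inn_C_mul_right μ hμT,
        inn_low' μ φ hμT horth hdeg (k+1) _ hps_deg]
      ring
    have t3 : inn μ (Polynomial.C β * pstar k (φ k)) (Polynomial.C ρ * φ (k+1)) = 0 := by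
      rw [inn_C_mul_left μ, inn_C_mul_right μ hμT,
        inn_low μ φ hμT horth hdeg (k+1) _ hps_deg]
      ring
    have t4 : inn μ (Polynomial.C β * pstar k (φ k)) (Polynomial.C β * pstar k (φ k))
        = β * conj β := by
      rw [inn_C_mul_left μ, inn_C_mul_right μ hμT,
        inn_pstar_self μ hμT k (φ k) (le_of_eq (hnd k)), inn_phi_phi μ φ horth, if_pos rfl]
      ring
    rw [t1, t2, t3, t4] at h1
    linear_combination h1
  exact ⟨ρ, β, hρ0, hnorm, hR1, hR2⟩

end Szego
end OPAux

namespace OPAux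
section CD
variable (μ : Measure ℂ) [IsFiniteMeasure μ]
variable (φ : ℕ → Polynomial ℂ)

/-- one step of the Christoffel-Darboux telescoping. -/
lemma cd_step (hμT : μ (Metric.sphere (0 : ℂ) 1)ᶜ = 0)
    (hμinf : ∀ s : Finset ℂ, μ ((s : Set ℂ)ᶜ) ≠ 0)
    (hdeg : ∀ k, (φ k).degree = (k : ℕ))
    (horth : ∀ k m, ∫ z, (φ k).eval z * conj ((φ m).eval z) ∂μ = if k = m then 1 else 0)
    (k : ℕ) (u v : ℂ) :
    conj ((pstar (k+1) (φ (k+1))).eval u) * (pstar (k+1) (φ (k+1))).eval v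
      - conj ((φ (k+1)).eval u) * (φ (k+1)).eval v
    = (conj ((pstar k (φ k)).eval u) * (pstar k (φ k)).eval v
        - conj ((φ k).eval u) * (φ k).eval v)
      + (1 - conj u * v) * (conj ((φ k).eval u) * (φ k).eval v) := by
  obtain ⟨ρ, β, hρ0, hnorm, hR1, hR2⟩ := szego μ φ hμT hμinf hdeg horth k
  set au := (φ k).eval u with hau
  set av := (φ k).eval v with hav
  set ψu := (pstar k (φ k)).eval u with hψu
  set ψv := (pstar k (φ k)).eval v with hψv
  set Φu := (φ (k+1)).eval u with hΦu
  set Φv := (φ (k+1)).eval v with hΦv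
  set Ψu := (pstar (k+1) (φ (k+1))).eval u with hΨu
  set Ψv := (pstar (k+1) (φ (k+1))).eval v with hΨv
  have E1 : ρ * Φv = v * av - β * ψv := by
    have := congrArg (Polynomial.eval v) hR1
    simpa [Polynomial.eval_mul, Polynomial.eval_sub] using this
  have E1u : ρ * Φu = u * au - β * ψu := by
    have := congrArg (Polynomial.eval u) hR1
    simpa [Polynomial.eval_mul, Polynomial.eval_sub] using this
  have E2 : conj ρ * conj Φu = conj u * conj au - conj β * conj ψu := by
    have := congrArg (starRingEnd ℂ) E1u
    simpa [map_mul, map_sub] using this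
  have E3 : conj ρ * Ψv = ψv - conj β * (v * av) := by
    have := congrArg (Polynomial.eval v) hR2
    simpa [Polynomial.eval_mul, Polynomial.eval_sub] using this
  have E3u : conj ρ * Ψu = ψu - conj β * (u * au) := by
    have := congrArg (Polynomial.eval u) hR2
    simpa [Polynomial.eval_mul, Polynomial.eval_sub] using this
  have E4 : ρ * conj Ψu = conj ψu - β * (conj u * conj au) := by
    have := congrArg (starRingEnd ℂ) E3u
    simpa [map_mul, map_sub] using this
  have hR : ρ * conj ρ ≠ 0 := by
    apply mul_ne_zero hρ0
    intro h
    apply hρ0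
    have := congrArg (starRingEnd ℂ) h
    simpa using this
  apply mul_left_cancel₀ hR
  have P1 : (ρ * conj Ψu) * (conj ρ * Ψv)
      = (conj ψu - β * (conj u * conj au)) * (ψv - conj β * (v * av)) := by
    rw [E4, E3]
  have P2 : (conj ρ * conj Φu) * (ρ * Φv)
      = (conj u * conj au - conj β * conj ψu) * (v * av - β * ψv) := by
    rw [E2, E1]
  linear_combination P1 - P2 - (conj ψu * ψv - conj u * v * (conj au * av)) * hnorm

/-- The Christoffel-Darboux formula. -/
lemma cd (hμT : μ (Metric.sphere (0 : ℂ) 1)ᶜ = 0)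
    (hμinf : ∀ s : Finset ℂ, μ ((s : Set ℂ)ᶜ) ≠ 0)
    (hdeg : ∀ k, (φ k).degree = (k : ℕ))
    (horth : ∀ k m, ∫ z, (φ k).eval z * conj ((φ m).eval z) ∂μ = if k = m then 1 else 0) :
    ∀ (N : ℕ) (u v : ℂ),
    conj ((pstar N (φ N)).eval u) * (pstar N (φ N)).eval v
      - conj ((φ N).eval u) * (φ N).eval v
    = (1 - conj u * v) * ∑ m ∈ Finset.range N, conj ((φ m).eval u) * (φ m).eval v := by
  intro N
  induction N with
  | zero =>
    intro u v
    have hφ0 : φ 0 = Polynomial.C ((φ 0).coeff 0) :=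
      Polynomial.eq_C_of_degree_le_zero (le_of_eq (hdeg 0))
    rw [Finset.range_zero, Finset.sum_empty, mul_zero, hφ0, pstar_C]
    simp only [Polynomial.eval_C, Complex.conj_conj]
    ring
  | succ N ih =>
    intro u v
    rw [cd_step μ φ hμT hμinf hdeg horth N u v, ih u v, Finset.sum_range_succ]
    ring

end CD
end OPAux

namespace OPAux
section Nodes
variable (μ : Measure ℂ) [IsFiniteMeasure μ]
variable (φ : ℕ → Polynomial ℂ)

lemma unit_mul_conj (z : ℂ) (hz : z ∈ Metric.sphere (0 : ℂ) 1) : z * conj z = 1 := by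
  have : ‖z‖ = 1 := by
    simpa [Complex.dist_eq] using hz
  rw [Complex.mul_conj, Complex.normSq_eq_norm_sq, this]
  norm_num

lemma phi0_eval_ne (hdeg : ∀ k, (φ k).degree = (k : ℕ)) (z : ℂ) : (φ 0).eval z ≠ 0 := by
  have hφ0 : φ 0 = Polynomial.C ((φ 0).coeff 0) :=
    Polynomial.eq_C_of_degree_le_zero (le_of_eq (hdeg 0))
  rw [hφ0, Polynomial.eval_C]
  have := phi_lead_ne φ hdeg 0
  rwa [Polynomial.leadingCoeff, phi_natDegree φ hdeg 0] at this

/-- the diagonal kernel value is a positive real. -/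
lemma kernel_diag_pos (hdeg : ∀ k, (φ k).degree = (k : ℕ)) (n : ℕ) (z : ℂ) :
    ∑ m ∈ Finset.range (n+1), conj ((φ m).eval z) * (φ m).eval z
      = ((∑ m ∈ Finset.range (n+1), ‖(φ m).eval z‖ ^ 2 : ℝ) : ℂ)
    ∧ 0 < ∑ m ∈ Finset.range (n+1), ‖(φ m).eval z‖ ^ 2 := by
  constructor
  · push_cast
    apply Finset.sum_congr rfl
    intro m _
    rw [mul_comm, Complex.mul_conj, ← Complex.sq_norm, Complex.ofReal_pow]
  · apply Finset.sum_pos'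
    · intro m _; positivity
    · refine ⟨0, Finset.mem_range.2 (Nat.succ_pos n), ?_⟩
      exact pow_pos (norm_pos_iff.mpr (phi0_eval_ne φ hdeg z)) 2

/-- Orthogonality of the Christoffel kernels at distinct zeros of the para-orthogonal
polynomial. -/
lemma kernel_node_orth (hμT : μ (Metric.sphere (0 : ℂ) 1)ᶜ = 0)
    (hμinf : ∀ s : Finset ℂ, μ ((s : Set ℂ)ᶜ) ≠ 0)
    (hdeg : ∀ k, (φ k).degree = (k : ℕ))
    (horth : ∀ k m, ∫ z, (φ k).eval z * conj ((φ m).eval z) ∂μ = if k = m then 1 else 0)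
    (n : ℕ) (w : ℂ) (hw : w ∈ Metric.sphere (0 : ℂ) 1)
    (ζ : Fin (n + 1) → ℂ)
    (hζT : ∀ j, ζ j ∈ Metric.sphere (0 : ℂ) 1)
    (hζinj : Function.Injective ζ)
    (hζ0 : ∀ l, (1 - conj w * ζ l)
      * ∑ m ∈ Finset.range (n+1), conj ((φ m).eval w) * (φ m).eval (ζ l) = 0)
    (i j : Fin (n + 1)) (hij : i ≠ j) :
    ∑ m ∈ Finset.range (n+1), conj ((φ m).eval (ζ i)) * (φ m).eval (ζ j) = 0 := by
  set Φ := φ (n+1) with hΦ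
  set Ψ := pstar (n+1) (φ (n+1)) with hΨ
  set A := conj (Ψ.eval w) with hA
  set B := conj (Φ.eval w) with hB
  have hcd := cd μ φ hμT hμinf hdeg horth (n+1)
  have hwc : w * conj w = 1 := unit_mul_conj w hw
  have habs : ‖Ψ.eval w‖ = ‖Φ.eval w‖ :=
    pstar_abs_circle (n+1) (φ (n+1)) (le_of_eq (phi_natDegree φ hdeg (n+1))) w hwc
  have hnode : ∀ l, A * Ψ.eval (ζ l) = B * Φ.eval (ζ l) := by
    intro l
    have h := hcd w (ζ l)
    rw [hζ0 l] at h
    exact sub_eq_zero.mp h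
  by_cases hBz : Φ.eval w = 0
  · -- degenerate case: contradiction
    exfalso
    have hAz : Ψ.eval w = 0 := by
      rw [hBz, norm_zero] at habs
      exact norm_eq_zero.1 habs
    set P := ∑ m ∈ Finset.range (n+1), Polynomial.C (conj ((φ m).eval w)) * φ m with hP
    have hPeval : ∀ v, P.eval v
        = ∑ m ∈ Finset.range (n+1), conj ((φ m).eval w) * (φ m).eval v := by
      intro v
      rw [hP, Polynomial.eval_finset_sum]
      simp [Polynomial.eval_mul]
    have hwne : conj w ≠ 0 := by
      intro h; rw [h, mul_zero] at hwc; exact zero_ne_one hwc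
    have hPzero : P = 0 := by
      apply Polynomial.eq_zero_of_infinite_isRoot
      apply Set.Infinite.mono (s := ({(conj w)⁻¹} : Set ℂ)ᶜ)
      · intro v hv
        simp only [Set.mem_compl_iff, Set.mem_singleton_iff] at hv
        have hfac : 1 - conj w * v ≠ 0 := by
          intro h
          apply hv
          field_simp
          linear_combination -h
        have h := hcd w v
        have hAz' : (pstar (n+1) (φ (n+1))).eval w = 0 := hAz
        have hBz' : (φ (n+1)).eval w = 0 := hBz
        rw [hAz', hBz', map_zero, zero_mul, zero_mul, sub_zero] at h
        have hS := (mul_eq_zero.1 h.symm).resolve_left hfac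
        simp only [Set.mem_setOf_eq, Polynomial.IsRoot]
        rw [hPeval v, hS]
      · exact Set.Finite.infinite_compl (Set.finite_singleton _)
    have := (kernel_diag_pos φ hdeg n w).2
    have hcontr : P.eval w = 0 := by rw [hPzero]; simp
    rw [hPeval w, (kernel_diag_pos φ hdeg n w).1] at hcontr
    rw [show ((0:ℂ)) = ((0:ℝ):ℂ) by norm_num] at hcontr
    have := Complex.ofReal_inj.1 hcontr
    linarith [(kernel_diag_pos φ hdeg n w).2]
  · -- main case
    have hBne : B ≠ 0 := by
      rw [hB]; intro h
      apply hBz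
      have := congrArg (starRingEnd ℂ) h
      simpa using this
    have hAne : A ≠ 0 := by
      rw [hA]; intro h
      have hz : Ψ.eval w = 0 := by
        have := congrArg (starRingEnd ℂ) h
        simpa using this
      rw [hz, norm_zero] at habs
      exact hBz (norm_eq_zero.1 habs.symm)
    have habs2 : A * conj A = B * conj B := by
      rw [hA, hB, Complex.conj_conj, Complex.conj_conj]
      rw [mul_comm, Complex.mul_conj, mul_comm, Complex.mul_conj]
      rw [← Complex.sq_norm, ← Complex.sq_norm, habs]
    have ni := hnode i
    have nj := hnode j
    have nic : conj A * conj (Ψ.eval (ζ i)) = conj B * conj (Φ.eval (ζ i)) := by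
      have := congrArg (starRingEnd ℂ) ni
      simpa [map_mul] using this
    have key : conj (Ψ.eval (ζ i)) * Ψ.eval (ζ j) - conj (Φ.eval (ζ i)) * Φ.eval (ζ j)
        = 0 := by
      have hAA : conj A * A ≠ 0 := by
        apply mul_ne_zero _ hAne
        intro h; apply hAne
        have := congrArg (starRingEnd ℂ) h
        simpa using this
      apply mul_left_cancel₀ hAA
      rw [mul_zero]
      linear_combination (A * Ψ.eval (ζ j)) * nic + (conj B * conj (Φ.eval (ζ i))) * nj
        - (conj (Φ.eval (ζ i)) * Φ.eval (ζ j)) * habs2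
    have hfac : (1 - conj (ζ i) * ζ j) ≠ 0 := by
      intro h
      have hzi : ζ i * conj (ζ i) = 1 := unit_mul_conj (ζ i) (hζT i)
      have : conj (ζ i) * (ζ j - ζ i) = 0 := by linear_combination -h - hzi
      have hczi : conj (ζ i) ≠ 0 := by
        intro hc; rw [hc, mul_zero] at hzi; exact zero_ne_one hzi
      have h2 := (mul_eq_zero.1 this).resolve_left hczi
      exact hij (hζinj (sub_eq_zero.1 h2).symm)
    have h := hcd (ζ i) (ζ j)
    rw [key] at h
    exact (mul_eq_zero.1 h.symm).resolve_left hfac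

end Nodes
end OPAux

namespace OPAux
section Bessel
variable (μ : Measure ℂ) [IsFiniteMeasure μ]

lemma integrable_conj_fn (g : ℂ → ℂ) (hgi : Integrable g μ) :
    Integrable (fun z => conj (g z)) μ := by
  refine hgi.norm.mono'
    (Complex.continuous_conj.comp_aestronglyMeasurable hgi.aestronglyMeasurable)
    (ae_of_all _ fun z => ?_)
  simp

lemma integrable_eval_mul_conj_fn (hμT : μ (Metric.sphere (0 : ℂ) 1)ᶜ = 0)
    (p : Polynomial ℂ) (g : ℂ → ℂ) (hgi : Integrable g μ) :
    Integrable (fun z => p.eval z * conj (g z)) μ := by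
  obtain ⟨C, hC⟩ := (isCompact_sphere (0:ℂ) 1).exists_bound_of_continuousOn
    (p.continuous_aeval).continuousOn
  refine Integrable.bdd_mul (c := C) (integrable_conj_fn μ g hgi)
    (p.continuous_aeval).aestronglyMeasurable ?_
  have hael : ∀ᵐ z ∂μ, z ∈ Metric.sphere (0:ℂ) 1 := by
    rw [ae_iff]; exact measure_mono_null (fun z hz => hz) hμT
  filter_upwards [hael] with z hz using hC z hz

/-- Bessel's inequality for a finite orthogonal family. -/
lemma bessel (hμT : μ (Metric.sphere (0 : ℂ) 1)ᶜ = 0) {m : ℕ}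
    (q : Polynomial ℂ) (K : Fin m → Polynomial ℂ) (Λ : Fin m → ℝ) (e : Fin m → ℂ)
    (hΛ : ∀ j, 0 < Λ j)
    (hKK : ∀ i j, inn μ (K i) (K j) = if i = j then ((Λ j : ℝ) : ℂ) else 0)
    (hq : ∀ j, inn μ q (K j) = e j) :
    ∑ j, ‖e j‖ ^ 2 / Λ j ≤ ∫ z, ‖q.eval z‖ ^ 2 ∂μ := by
  set T : ℝ := ∑ j, ‖e j‖ ^ 2 / Λ j with hT
  set c : Fin m → ℂ := fun j => e j / ((Λ j : ℝ) : ℂ) with hc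
  set s : Polynomial ℂ := ∑ j, Polynomial.C (c j) * K j with hs
  have habs : ∀ j : Fin m, conj (e j) * e j = ((‖e j‖ ^ 2 : ℝ) : ℂ) := by
    intro j
    rw [mul_comm, Complex.mul_conj, ← Complex.sq_norm, Complex.ofReal_pow]
  have hinnKq : ∀ j, inn μ (K j) q = conj (e j) := by
    intro j; rw [inn_conj_symm μ, hq j]
  have h1 : inn μ q s = ((T : ℝ) : ℂ) := by
    rw [hs, inn_sum_right μ hμT]
    have : ∀ j : Fin m, conj (inn μ (Polynomial.C (c j) * K j) q)
        = ((‖e j‖ ^ 2 / Λ j : ℝ) : ℂ) := by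
      intro j
      rw [inn_C_mul_left μ, hinnKq j, map_mul, Complex.conj_conj, hc]
      simp only [map_div₀, Complex.conj_ofReal]
      rw [div_mul_eq_mul_div, habs j, Complex.ofReal_div]
    rw [Finset.sum_congr rfl (fun j _ => this j), hT]
    push_cast
    ring
  have h2 : inn μ s q = ((T : ℝ) : ℂ) := by
    rw [inn_conj_symm μ, h1, Complex.conj_ofReal]
  have h3 : inn μ s s = ((T : ℝ) : ℂ) := by
    rw [hs, inn_sum_left μ hμT]
    have : ∀ j : Fin m, inn μ (Polynomial.C (c j) * K j) s
        = ((‖e j‖ ^ 2 / Λ j : ℝ) : ℂ) := by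
      intro j
      rw [inn_C_mul_left μ, hs, inn_sum_right μ hμT]
      have hterm : ∀ i : Fin m, conj (inn μ (Polynomial.C (c i) * K i) (K j))
          = if i = j then conj (c j) * ((Λ j : ℝ) : ℂ) else 0 := by
        intro i
        rw [inn_C_mul_left μ, hKK i j]
        split
        · subst ‹i = j›; rw [map_mul, Complex.conj_ofReal]
        · rw [mul_zero, map_zero]
      rw [Finset.sum_congr rfl (fun i _ => hterm i), Finset.sum_ite_eq' Finset.univ j
        (fun _ => conj (c j) * ((Λ j : ℝ) : ℂ)), if_pos (Finset.mem_univ j)]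
      rw [hc]
      simp only [map_div₀, Complex.conj_ofReal]
      have hΛ0 : ((Λ j : ℝ) : ℂ) ≠ 0 := by
        exact_mod_cast ne_of_gt (hΛ j)
      field_simp
      rw [mul_comm (e j) (conj (e j)), habs j, Complex.ofReal_pow]
      rw [Complex.ofReal_div, Complex.ofReal_pow]
      field_simp
    rw [Finset.sum_congr rfl (fun j _ => this j), hT]
    push_cast
    ring
  have h4 : inn μ (q - s) (q - s) = inn μ q q - ((T : ℝ) : ℂ) := by
    rw [inn_sub_left μ hμT, inn_sub_right μ hμT, inn_sub_right μ hμT, h1, h2, h3]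
    ring
  rw [inn_self μ, inn_self μ] at h4
  have h5 : ∫ z, ‖(q - s).eval z‖ ^ 2 ∂μ
      = (∫ z, ‖q.eval z‖ ^ 2 ∂μ) - T := by
    have := h4
    rw [← Complex.ofReal_sub] at this
    exact_mod_cast this
  have h6 := inn_self_nonneg μ (q - s)
  linarith

end Bessel
end OPAux

namespace OPAux
section Rep
variable (μ : Measure ℂ) [IsFiniteMeasure μ]
variable (φ : ℕ → Polynomial ℂ)

lemma inn_comb_right (hμT : μ (Metric.sphere (0 : ℂ) 1)ᶜ = 0)
    (horth : ∀ k m, ∫ z, (φ k).eval z * conj ((φ m).eval z) ∂μ = if k = m then 1 else 0)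
    (n : ℕ) (a : ℕ → ℂ) (m : ℕ) (hm : m < n + 1) :
    inn μ (φ m) (∑ l ∈ Finset.range (n+1), Polynomial.C (a l) * φ l) = conj (a m) := by
  rw [inn_sum_right μ hμT]
  have hterm : ∀ l ∈ Finset.range (n+1),
      conj (inn μ (Polynomial.C (a l) * φ l) (φ m)) = if l = m then conj (a m) else 0 := by
    intro l _
    rw [inn_C_mul_left μ, inn_phi_phi μ φ horth l m]
    split
    · subst ‹l = m›; rw [mul_one]
    · rw [mul_zero, map_zero]
  rw [Finset.sum_congr rfl hterm,
    Finset.sum_ite_eq' (Finset.range (n+1)) m (fun _ => conj (a m)),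
    if_pos (Finset.mem_range.2 hm)]

end Rep
end OPAux


open OPAux in
/-- **Key estimate in the proof of the uniform boundedness lemma.** For every continuous
`f : T → ℂ` and every `g ∈ L²(μ)`,
`|∫_T L_n(f) conj(g) dμ| ≤ μ(T)^{1/2} · (max_{z∈T} |f(z)|) · ‖S_n(g)‖_{L²(μ)}`,
where `S_n(g) = ∑_{k=0}^n ⟨g, φ_k⟩ φ_k` is the `n`-th partial sum of the Fourier expansion
of `g` in the orthonormal polynomials `φ_k`. -/
theorem abs_integral_lagrangeInterp_mul_conj_le
    (μ : Measure ℂ) [IsFiniteMeasure μ]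
    (hμT : μ (Metric.sphere (0 : ℂ) 1)ᶜ = 0)
    (hμinf : ∀ s : Finset ℂ, μ ((s : Set ℂ)ᶜ) ≠ 0)
    (φ : ℕ → Polynomial ℂ)
    (hdeg : ∀ k, (φ k).degree = (k : ℕ))
    (hlead : ∀ k, 0 < ((φ k).leadingCoeff).re ∧ ((φ k).leadingCoeff).im = 0)
    (horth : ∀ k m, ∫ z, (φ k).eval z * conj ((φ m).eval z) ∂μ
        = if k = m then 1 else 0)
    (n : ℕ) (w : ℂ) (hw : w ∈ Metric.sphere (0 : ℂ) 1)
    (ζ : Fin (n + 1) → ℂ)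
    (hζT : ∀ j, ζ j ∈ Metric.sphere (0 : ℂ) 1)
    (hζinj : Function.Injective ζ)
    (hζ0 : ∀ j, paraOrtho φ n w (ζ j) = 0)
    (f : ℂ → ℂ) (hf : ContinuousOn f (Metric.sphere (0 : ℂ) 1))
    (g : ℂ → ℂ) (hg : MemLp g 2 μ) :
    ‖(∫ z, lagrangeInterp φ n ζ f z * conj (g z) ∂μ)‖
      ≤ Real.sqrt (μ Set.univ).toReal
        * sSup ((fun z => ‖(f z)‖) '' Metric.sphere (0 : ℂ) 1)
        * Real.sqrt (∫ z,
            ‖(∑ k ∈ Finset.range (n + 1),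
              (∫ x, g x * conj ((φ k).eval x) ∂μ) * (φ k).eval z)‖ ^ 2 ∂μ) := by
  classical
  set cg : ℕ → ℂ := fun k => ∫ x, g x * conj ((φ k).eval x) ∂μ with hcg
  set Sgp : Polynomial ℂ := ∑ k ∈ Finset.range (n+1), Polynomial.C (cg k) * φ k with hSgp
  set Kp : Fin (n+1) → Polynomial ℂ :=
    fun j => ∑ m ∈ Finset.range (n+1), Polynomial.C (conj ((φ m).eval (ζ j))) * φ m with hKp
  set Λ : Fin (n+1) → ℝ :=
    fun j => ∑ m ∈ Finset.range (n+1), ‖(φ m).eval (ζ j)‖ ^ 2 with hΛdef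
  have hΛpos : ∀ j, 0 < Λ j := fun j => (kernel_diag_pos φ hdeg n (ζ j)).2
  have hΛne : ∀ j, Λ j ≠ 0 := fun j => ne_of_gt (hΛpos j)
  have hKdiag : ∀ j, christoffelK φ n (ζ j) (ζ j) = ((Λ j : ℝ) : ℂ) :=
    fun j => (kernel_diag_pos φ hdeg n (ζ j)).1
  have hKpeval : ∀ (j : Fin (n+1)) (z : ℂ), (Kp j).eval z = christoffelK φ n (ζ j) z := by
    intro j z
    rw [hKp, christoffelK]
    simp [Polynomial.eval_finset_sum]
  have hgi : Integrable g μ := hg.integrable one_le_two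
  have hSgpeval : ∀ z, Sgp.eval z = ∑ k ∈ Finset.range (n+1), cg k * (φ k).eval z := by
    intro z
    rw [hSgp]
    simp [Polynomial.eval_finset_sum]
  -- orthogonality of the kernels
  have hζ0' : ∀ l, (1 - conj w * ζ l)
      * ∑ m ∈ Finset.range (n+1), conj ((φ m).eval w) * (φ m).eval (ζ l) = 0 := by
    intro l
    have h := hζ0 l
    rwa [paraOrtho, christoffelK] at h
  have hKK : ∀ i j, inn μ (Kp i) (Kp j) = if i = j then ((Λ j : ℝ) : ℂ) else 0 := by
    intro i j
    have hval : inn μ (Kp i) (Kp j)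
        = ∑ m ∈ Finset.range (n+1), conj ((φ m).eval (ζ i)) * (φ m).eval (ζ j) := by
      rw [hKp, inn_sum_left μ hμT]
      apply Finset.sum_congr rfl
      intro m hm
      rw [inn_C_mul_left μ,
        inn_comb_right μ φ hμT horth n _ m (Finset.mem_range.1 hm), Complex.conj_conj]
    rw [hval]
    by_cases hij : i = j
    · subst hij
      rw [if_pos rfl]
      exact (kernel_diag_pos φ hdeg n (ζ i)).1
    · rw [if_neg hij]
      exact kernel_node_orth μ φ hμT hμinf hdeg horth n w hw ζ hζT hζinj hζ0' i j hij
  -- reproducing properties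
  have hrepS : ∀ j, inn μ Sgp (Kp j) = Sgp.eval (ζ j) := by
    intro j
    rw [hSgp, inn_sum_left μ hμT, hSgpeval (ζ j)]
    apply Finset.sum_congr rfl
    intro k hk
    rw [inn_C_mul_left μ, hKp,
      inn_comb_right μ φ hμT horth n _ k (Finset.mem_range.1 hk), Complex.conj_conj]
  have hrep1 : ∀ j, inn μ (1 : Polynomial ℂ) (Kp j) = 1 := by
    intro j
    have hφ0 : φ 0 = Polynomial.C ((φ 0).coeff 0) :=
      Polynomial.eq_C_of_degree_le_zero (le_of_eq (hdeg 0))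
    have ha : (φ 0).coeff 0 ≠ 0 := by
      have := phi_lead_ne φ hdeg 0
      rwa [Polynomial.leadingCoeff, phi_natDegree φ hdeg 0] at this
    have h1 : (1 : Polynomial ℂ) = Polynomial.C ((φ 0).coeff 0)⁻¹ * φ 0 := by
      nth_rewrite 2 [hφ0]
      rw [← Polynomial.C_mul, inv_mul_cancel₀ ha, Polynomial.C_1]
    rw [h1, inn_C_mul_left μ, hKp,
      inn_comb_right μ φ hμT horth n _ 0 (Nat.succ_pos n), Complex.conj_conj]
    rw [hφ0, Polynomial.eval_C]
    field_simp
    rw [Polynomial.coeff_C_zero, div_self ha]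
  -- the integral identity
  have hint1 : ∀ j, ∫ z, (Kp j).eval z * conj (g z) ∂μ = conj (Sgp.eval (ζ j)) := by
    intro j
    have expand : ∀ z, (Kp j).eval z * conj (g z)
        = ∑ m ∈ Finset.range (n+1),
            conj ((φ m).eval (ζ j)) * ((φ m).eval z * conj (g z)) := by
      intro z
      rw [hKp, Polynomial.eval_finset_sum, Finset.sum_mul]
      apply Finset.sum_congr rfl
      intro m _
      rw [Polynomial.eval_mul, Polynomial.eval_C]
      ring
    have hphig : ∀ m, ∫ z, (φ m).eval z * conj (g z) ∂μ = conj (cg m) := by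
      intro m
      rw [hcg, ← integral_conj]
      congr 1; funext z
      rw [map_mul, Complex.conj_conj]
      ring
    calc ∫ z, (Kp j).eval z * conj (g z) ∂μ
        = ∑ m ∈ Finset.range (n+1),
            conj ((φ m).eval (ζ j)) * ∫ z, (φ m).eval z * conj (g z) ∂μ := by
          simp_rw [expand]
          rw [integral_finset_sum _ (fun m _ =>
            (integrable_eval_mul_conj_fn μ hμT (φ m) g hgi).const_mul _)]
          exact Finset.sum_congr rfl (fun m _ => integral_const_mul _ _)
      _ = ∑ m ∈ Finset.range (n+1), conj ((φ m).eval (ζ j)) * conj (cg m) := by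
          exact Finset.sum_congr rfl (fun m _ => by rw [hphig m])
      _ = conj (Sgp.eval (ζ j)) := by
          rw [hSgpeval (ζ j), map_sum]
          exact (Finset.sum_congr rfl (fun m _ => by rw [map_mul]; ring)).symm
  have hL : (∫ z, lagrangeInterp φ n ζ f z * conj (g z) ∂μ)
      = ∑ j : Fin (n+1), (f (ζ j) / ((Λ j : ℝ) : ℂ)) * conj (Sgp.eval (ζ j)) := by
    have expand : ∀ z, lagrangeInterp φ n ζ f z * conj (g z)
        = ∑ j : Fin (n+1), (f (ζ j) / ((Λ j : ℝ) : ℂ)) * ((Kp j).eval z * conj (g z)) := by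
      intro z
      rw [lagrangeInterp, Finset.sum_mul]
      apply Finset.sum_congr rfl
      intro j _
      rw [ellFun, hKdiag j, ← hKpeval j z]
      ring
    simp_rw [expand]
    rw [integral_finset_sum _ (fun j _ =>
      (integrable_eval_mul_conj_fn μ hμT (Kp j) g hgi).const_mul _)]
    apply Finset.sum_congr rfl
    intro j _
    rw [integral_const_mul, hint1 j]
  -- the sup bound
  set M := sSup ((fun z => ‖f z‖) '' Metric.sphere (0 : ℂ) 1) with hM
  have himg : IsCompact ((fun z => ‖f z‖) '' Metric.sphere (0 : ℂ) 1) :=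
    (isCompact_sphere (0:ℂ) 1).image_of_continuousOn
      (continuous_norm.comp_continuousOn hf)
  have hMf : ∀ j, ‖f (ζ j)‖ ≤ M :=
    fun j => le_csSup himg.bddAbove ⟨ζ j, hζT j, rfl⟩
  have hM0 : 0 ≤ M := le_trans (norm_nonneg _) (hMf 0)
  -- Bessel applications
  set T : ℝ := (μ Set.univ).toReal with hTdef
  have hT0 : 0 ≤ T := ENNReal.toReal_nonneg
  set N2 : ℝ := ∫ z, ‖Sgp.eval z‖ ^ 2 ∂μ with hN2def
  have hN20 : 0 ≤ N2 := integral_nonneg (fun _ => sq_nonneg _)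
  have hB1 : ∑ j : Fin (n+1), 1 / Λ j ≤ T := by
    have hb := bessel μ hμT (1 : Polynomial ℂ) Kp Λ (fun _ => 1) hΛpos hKK hrep1
    simpa [integral_const, smul_eq_mul, hTdef, Measure.real] using hb
  have hB2 : ∑ j : Fin (n+1), ‖Sgp.eval (ζ j)‖ ^ 2 / Λ j ≤ N2 :=
    bessel μ hμT Sgp Kp Λ (fun j => Sgp.eval (ζ j)) hΛpos hKK hrepS
  -- Cauchy-Schwarz on the sum
  have hCS : (∑ j : Fin (n+1), ‖Sgp.eval (ζ j)‖ / Λ j) ^ 2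
      ≤ (∑ j : Fin (n+1), 1 / Λ j)
        * ∑ j : Fin (n+1), ‖Sgp.eval (ζ j)‖ ^ 2 / Λ j := by
    apply Finset.sum_sq_le_sum_mul_sum_of_sq_eq_mul
    · intro i _; positivity
    · intro i _; positivity
    · intro i _
      field_simp
  have hsum0 : 0 ≤ ∑ j : Fin (n+1), ‖Sgp.eval (ζ j)‖ / Λ j := by
    apply Finset.sum_nonneg; intro i _; positivity
  have hg20 : 0 ≤ ∑ j : Fin (n+1), ‖Sgp.eval (ζ j)‖ ^ 2 / Λ j := by
    apply Finset.sum_nonneg; intro i _; positivity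
  have hCS2 : (∑ j : Fin (n+1), ‖Sgp.eval (ζ j)‖ / Λ j)
      ≤ Real.sqrt T * Real.sqrt N2 := by
    have h1 : (∑ j : Fin (n+1), ‖Sgp.eval (ζ j)‖ / Λ j) ^ 2 ≤ T * N2 :=
      le_trans hCS (mul_le_mul hB1 hB2 hg20 hT0)
    have h2 := Real.sqrt_le_sqrt h1
    rwa [Real.sqrt_sq hsum0, Real.sqrt_mul hT0] at h2
  -- put it together
  have hchain : ‖∫ z, lagrangeInterp φ n ζ f z * conj (g z) ∂μ‖
      ≤ M * ∑ j : Fin (n+1), ‖Sgp.eval (ζ j)‖ / Λ j := by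
    rw [hL]
    apply le_trans (norm_sum_le _ _)
    rw [Finset.mul_sum]
    apply Finset.sum_le_sum
    intro j _
    rw [norm_mul, norm_div, Complex.norm_conj, Complex.norm_real,
      Real.norm_of_nonneg (le_of_lt (hΛpos j))]
    have hre : ‖f (ζ j)‖ / Λ j * ‖Sgp.eval (ζ j)‖
        = ‖f (ζ j)‖ * (‖Sgp.eval (ζ j)‖ / Λ j) := by ring
    rw [hre]
    apply mul_le_mul_of_nonneg_right (hMf j)
    positivity
  have hfinal : ‖∫ z, lagrangeInterp φ n ζ f z * conj (g z) ∂μ‖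
      ≤ M * (Real.sqrt T * Real.sqrt N2) :=
    le_trans hchain (mul_le_mul_of_nonneg_left hCS2 hM0)
  have hN2eq : (∫ z, ‖∑ k ∈ Finset.range (n + 1),
      (∫ x, g x * conj ((φ k).eval x) ∂μ) * (φ k).eval z‖ ^ 2 ∂μ) = N2 := by
    rw [hN2def]
    congr 1; funext z
    rw [hSgpeval z]
  rw [hN2eq]
  calc ‖∫ z, lagrangeInterp φ n ζ f z * conj (g z) ∂μ‖
      ≤ M * (Real.sqrt T * Real.sqrt N2) := hfinal
    _ = Real.sqrt T * M * Real.sqrt N2 := by ring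
end
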